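/- arXiv:1411.4887 — 5 statements merged into one kernel-verified Lean document; each statement's English description precedes it below -/
import Mathlib

section
/- Let V be a 3-dimensional real inner product space and A : V → V a symmetric endomorphism. Then there exists a 2-dimensional subspace P of V such that ⟨A v₁, v₂⟩ = 0 for all v₁, v₂ ∈ P and ⟨A w, w⟩ = 0 for all w ∈ P⊥, if and only if det(A) = 0 and trace(A) = 0. -/
open scoped RealInnerProductSpace

section Aux

variable {V : Type*} [NormedAddCommGroup V] [InnerProductSpace ℝ V] [FiniteDimensional ℝ V]

private lemma ob_toMatrix {n : ℕ} (b : OrthonormalBasis (Fin n) ℝ V) (A : V →ₗ[ℝ] V)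
    (i j : Fin n) :
    LinearMap.toMatrix b.toBasis b.toBasis A i j = ⟪b i, A (b j)⟫ := by
  simp [LinearMap.toMatrix_apply, OrthonormalBasis.coe_toBasis_repr_apply,
    OrthonormalBasis.repr_apply_apply]

private lemma exists_plane (A : V →ₗ[ℝ] V)
    (e : OrthonormalBasis (Fin 3) ℝ V) (μ : Fin 3 → ℝ)
    (he : ∀ i, A (e i) = μ i • e i) (h0 : μ 0 = 0) (h12 : μ 1 + μ 2 = 0) :
    ∃ P : Submodule ℝ V, Module.finrank ℝ P = 2 ∧
        (∀ v₁ ∈ P, ∀ v₂ ∈ P, ⟪A v₁, v₂⟫ = 0) ∧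
        (∀ w ∈ Pᗮ, ⟪A w, w⟫ = 0) := by
  have hie : ∀ i j, ⟪e i, e j⟫ = if i = j then 1 else 0 := orthonormal_iff_ite.mp e.orthonormal
  set u : V := e 1 + e 2 with hu
  refine ⟨Submodule.span ℝ {e 0, u}, ?_, ?_, ?_⟩
  · have hli : LinearIndependent ℝ ![e 0, u] := by
      rw [linearIndependent_fin2]
      constructor
      · intro h
        have h1 := congrArg (fun x => ⟪e 1, x⟫) h
        simp [hu, inner_add_right, hie] at h1
      · intro a h
        have h1 := congrArg (fun x => ⟪e 0, x⟫) h
        simp [hu, inner_add_right, real_inner_smul_right, hie] at h1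
    have hset : ({e 0, u} : Set V) = Set.range ![e 0, u] := by
      ext x
      constructor
      · rintro (rfl | rfl) <;> [exact ⟨0, rfl⟩; exact ⟨1, rfl⟩]
      · rintro ⟨i, rfl⟩
        fin_cases i <;> simp
    rw [hset]
    simpa using finrank_span_eq_card hli
  · rintro v₁ hv₁ v₂ hv₂
    obtain ⟨a, b, rfl⟩ := Submodule.mem_span_pair.mp hv₁
    obtain ⟨c, d, rfl⟩ := Submodule.mem_span_pair.mp hv₂
    simp only [hu, map_add, map_smul, he, h0, zero_smul, smul_zero, zero_add, add_zero,
      inner_add_left, inner_add_right, real_inner_smul_left, real_inner_smul_right, smul_add,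
      hie]
    norm_num [Fin.ext_iff]
    linear_combination b * d * h12
  · intro w hw
    have h0w : ⟪e 0, w⟫ = 0 :=
      Submodule.inner_right_of_mem_orthogonal (Submodule.subset_span (by simp)) hw
    have huw : ⟪u, w⟫ = 0 :=
      Submodule.inner_right_of_mem_orthogonal (Submodule.subset_span (by simp)) hw
    have hbc : ⟪e 1, w⟫ + ⟪e 2, w⟫ = 0 := by
      rw [hu, inner_add_left] at huw; exact huw
    have hw' : A w = ∑ i, ⟪e i, w⟫ • (μ i • e i) := by
      conv_lhs => rw [← e.sum_repr' w]
      simp [he]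
    rw [hw', sum_inner, Fin.sum_univ_three]
    simp only [real_inner_smul_left]
    have hc : ⟪e 2, w⟫ = -⟪e 1, w⟫ := by linarith
    have hm : μ 2 = -μ 1 := by linarith
    rw [h0w, hc, hm, h0]
    ring

end Aux

/-- A symmetric endomorphism of a 3-dimensional real inner product space admits
a 2-dimensional subspace `P` with `⟨A v₁, v₂⟩ = 0` for all `v₁, v₂ ∈ P` and
`⟨A w, w⟩ = 0` for all `w ∈ Pᗮ`, if and only if `det A = 0` and `trace A = 0`. -/
theorem symmetric_endo_plane_iff_det_trace_zero
    {V : Type*} [NormedAddCommGroup V] [InnerProductSpace ℝ V]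
    [FiniteDimensional ℝ V] (hV : Module.finrank ℝ V = 3)
    (A : V →ₗ[ℝ] V) (hA : A.IsSymmetric) :
    (∃ P : Submodule ℝ V, Module.finrank ℝ P = 2 ∧
        (∀ v₁ ∈ P, ∀ v₂ ∈ P, ⟪A v₁, v₂⟫ = 0) ∧
        (∀ w ∈ Pᗮ, ⟪A w, w⟫ = 0)) ↔
      LinearMap.det A = 0 ∧ LinearMap.trace ℝ V A = 0 := by
  constructor
  · rintro ⟨P, hP2, h1, h2⟩
    have hPo : Module.finrank ℝ Pᗮ = 1 := by
      have := Submodule.finrank_add_finrank_orthogonal (𝕜 := ℝ) P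
      omega
    let b := (stdOrthonormalBasis ℝ P).reindex (finCongr hP2)
    let c := (stdOrthonormalBasis ℝ Pᗮ).reindex (finCongr hPo)
    let f : V →ₗ[ℝ] V := A
    let g : Fin 3 → V := ![b 0, b 1, c 0]
    have hg0 : g 0 ∈ P := by simp [g]
    have hg1 : g 1 ∈ P := by simp [g]
    have hg2 : g 2 ∈ Pᗮ := by simp [g]
    have hib : ∀ i j : Fin 2, (⟪b i, b j⟫ : ℝ) = if i = j then 1 else 0 :=
      orthonormal_iff_ite.mp b.orthonormal
    have hic : (⟪c 0, c 0⟫ : ℝ) = 1 := by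
      have := orthonormal_iff_ite.mp c.orthonormal 0 0
      simpa using this
    have hig : ∀ i j, ⟪g i, g j⟫ = if i = j then 1 else 0 := by
      intro i j
      fin_cases i <;> fin_cases j
      · change ⟪(b 0 : V), (b 0 : V)⟫ = _; rw [← Submodule.coe_inner, hib]; simp
      · change ⟪(b 0 : V), (b 1 : V)⟫ = _; rw [← Submodule.coe_inner, hib]; simp
      · simpa [g] using Submodule.inner_right_of_mem_orthogonal hg0 hg2
      · change ⟪(b 1 : V), (b 0 : V)⟫ = _; rw [← Submodule.coe_inner, hib]; simp
      · change ⟪(b 1 : V), (b 1 : V)⟫ = _; rw [← Submodule.coe_inner, hib]; simp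
      · simpa [g] using Submodule.inner_right_of_mem_orthogonal hg1 hg2
      · simpa [g] using Submodule.inner_left_of_mem_orthogonal hg0 hg2
      · simpa [g] using Submodule.inner_left_of_mem_orthogonal hg1 hg2
      · change ⟪(c 0 : V), (c 0 : V)⟫ = _; rw [← Submodule.coe_inner, hic]; simp
    have horth : Orthonormal ℝ g := orthonormal_iff_ite.mpr hig
    have hcard : Fintype.card (Fin 3) = Module.finrank ℝ V := by simp [hV]
    let B := basisOfLinearIndependentOfCardEqFinrank horth.linearIndependent hcard
    have hB : ⇑B = g := coe_basisOfLinearIndependentOfCardEqFinrank _ _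
    let ob := B.toOrthonormalBasis (hB ▸ horth)
    have hob : ∀ i, ob i = g i := by
      intro i
      simp only [ob, Module.Basis.coe_toOrthonormalBasis, hB]
    have hM : ∀ i j, LinearMap.toMatrix ob.toBasis ob.toBasis A i j = ⟪g i, A (g j)⟫ := by
      intro i j
      rw [ob_toMatrix, hob, hob]
    have z00 : (⟪g 0, A (g 0)⟫ : ℝ) = 0 := by
      rw [real_inner_comm]; exact h1 _ hg0 _ hg0
    have z01 : (⟪g 0, A (g 1)⟫ : ℝ) = 0 := by
      rw [real_inner_comm]; exact h1 _ hg1 _ hg0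
    have z10 : (⟪g 1, A (g 0)⟫ : ℝ) = 0 := by
      rw [real_inner_comm]; exact h1 _ hg0 _ hg1
    have z11 : (⟪g 1, A (g 1)⟫ : ℝ) = 0 := by
      rw [real_inner_comm]; exact h1 _ hg1 _ hg1
    have z22 : (⟪g 2, A (g 2)⟫ : ℝ) = 0 := by
      rw [real_inner_comm]; exact h2 _ hg2
    constructor
    · rw [← LinearMap.det_toMatrix ob.toBasis A, Matrix.det_fin_three]
      simp only [hM, z00, z01, z10, z11, z22]
      ring
    · rw [LinearMap.trace_eq_matrix_trace ℝ ob.toBasis A, Matrix.trace,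
        Fin.sum_univ_three]
      simp only [Matrix.diag_apply, hM, z00, z11, z22]
      ring
  · rintro ⟨hdet, htr⟩
    set e := hA.eigenvectorBasis hV with hedef
    set μ := hA.eigenvalues hV with hmudef
    have he : ∀ i, A (e i) = μ i • e i := fun i => by
      exact hA.apply_eigenvectorBasis hV i
    have hMdiag : LinearMap.toMatrix e.toBasis e.toBasis A = Matrix.diagonal μ := by
      ext i j
      rw [ob_toMatrix, he j, real_inner_smul_right, orthonormal_iff_ite.mp e.orthonormal]
      by_cases h : i = j <;> simp [h, Matrix.diagonal]
    have hprod : μ 0 * (μ 1 * μ 2) = 0 := by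
      have hd := LinearMap.det_toMatrix e.toBasis A
      rw [hMdiag, Matrix.det_diagonal, Fin.prod_univ_three, hdet, mul_assoc] at hd
      exact hd
    have hsum : μ 0 + μ 1 + μ 2 = 0 := by
      have ht := LinearMap.trace_eq_matrix_trace ℝ e.toBasis A
      rw [hMdiag, htr] at ht
      have : Matrix.trace (Matrix.diagonal μ) = μ 0 + μ 1 + μ 2 := by
        simp [Matrix.trace, Fin.sum_univ_three]
      rw [this] at ht
      linarith
    rcases mul_eq_zero.mp hprod with h | h'
    · exact exists_plane A e μ he h (by linarith)
    rcases mul_eq_zero.mp h' with h | h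
    · refine exists_plane A (e.reindex (Equiv.swap 0 1)) (μ ∘ (Equiv.swap 0 1)) ?_ ?_ ?_
      · intro i
        rw [OrthonormalBasis.reindex_apply]
        have : (Equiv.swap (0 : Fin 3) 1).symm i = Equiv.swap 0 1 i := by
          rw [Equiv.symm_swap]
        rw [this]
        exact he _
      · simpa using h
      · have e1 : Equiv.swap (0 : Fin 3) 1 1 = 0 := by decide
        have e2 : Equiv.swap (0 : Fin 3) 1 2 = 2 := by decide
        simp only [Function.comp, e1, e2]
        linarith
    · refine exists_plane A (e.reindex (Equiv.swap 0 2)) (μ ∘ (Equiv.swap 0 2)) ?_ ?_ ?_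
      · intro i
        rw [OrthonormalBasis.reindex_apply]
        have : (Equiv.swap (0 : Fin 3) 2).symm i = Equiv.swap 0 2 i := by
          rw [Equiv.symm_swap]
        rw [this]
        exact he _
      · simpa using h
      · have e1 : Equiv.swap (0 : Fin 3) 2 1 = 1 := by decide
        have e2 : Equiv.swap (0 : Fin 3) 2 2 = 0 := by decide
        simp only [Function.comp, e1, e2]
        linarith
end

section
/- In a 4-dimensional oriented real inner product space V, every bivector lying in the orthogonal complement Λ²(v⊥) of v ∧ v⊥, for a unit vector v, is simple; consequently, if a symmetric endomorphism W of Λ²V leaves v ∧ v⊥ invariant, then all of Λ²V admits a basis of eigenvectors of W that are simple bivectors. -/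
open scoped RealInnerProductSpace

/-- In a 4-dimensional real inner product space `V` (with `Λ²V` modelled by `E` and the
alternating map `w`), every bivector in `Λ²(v⊥)`, which is the orthogonal complement of
`v ∧ v⊥` for a unit vector `v`, is simple; consequently, if a symmetric endomorphism `W`
of `Λ²V` leaves `v ∧ v⊥` invariant, then `Λ²V` admits a basis of eigenvectors of `W`
that are simple bivectors. -/
theorem dim4_simple_eigenbasis
    {V E : Type*} [NormedAddCommGroup V] [InnerProductSpace ℝ V]
    [NormedAddCommGroup E] [InnerProductSpace ℝ E]
    [FiniteDimensional ℝ V] [FiniteDimensional ℝ E]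
    (hV : Module.finrank ℝ V = 4)
    (w : V →ₗ[ℝ] V →ₗ[ℝ] E)
    (halt : ∀ x : V, w x x = 0)
    (hinner : ∀ a b c d : V, ⟪w a b, w c d⟫ = ⟪a, c⟫ * ⟪b, d⟫ - ⟪a, d⟫ * ⟪b, c⟫)
    (hspan : Submodule.span ℝ {ξ : E | ∃ x y : V, ξ = w x y} = ⊤)
    (W : E →ₗ[ℝ] E) (hW : W.IsSymmetric)
    (v : V) (hv : ‖v‖ = 1)
    (hinv : ∀ ξ ∈ Submodule.span ℝ {ξ : E | ∃ u : V, ⟪v, u⟫ = 0 ∧ ξ = w v u},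
      W ξ ∈ Submodule.span ℝ {ξ : E | ∃ u : V, ⟪v, u⟫ = 0 ∧ ξ = w v u}) :
    (∀ ξ ∈ Submodule.span ℝ {ξ : E | ∃ u₁ u₂ : V, ⟪v, u₁⟫ = 0 ∧ ⟪v, u₂⟫ = 0 ∧ ξ = w u₁ u₂},
      ∃ x y : V, ξ = w x y) ∧
    ∃ s : Fin 6 → E, LinearIndependent ℝ s ∧ Submodule.span ℝ (Set.range s) = ⊤ ∧
      ∀ i, (∃ x y : V, s i = w x y) ∧ ∃ μ : ℝ, W (s i) = μ • s i := by
  classical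
  have hvv : ⟪v, v⟫ = 1 := by
    rw [real_inner_self_eq_norm_sq, hv]; norm_num
  have hv0 : v ≠ 0 := by
    intro h; rw [h, norm_zero] at hv; norm_num at hv
  have hanti : ∀ x y : V, w y x = - w x y := by
    intro x y
    have h := halt (x + y)
    simp only [map_add, LinearMap.add_apply, halt, zero_add, add_zero] at h
    exact eq_neg_of_add_eq_zero_left h
  haveI : Fact (Module.finrank ℝ V = 3 + 1) := ⟨by rw [hV]⟩
  set K : Submodule ℝ V := (ℝ ∙ v)ᗮ with hK_def
  have hK3 : Module.finrank ℝ K = 3 := Submodule.finrank_orthogonal_span_singleton hv0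
  set b : OrthonormalBasis (Fin 3) ℝ K :=
    (stdOrthonormalBasis ℝ K).reindex (finCongr hK3) with hb_def
  set e : Fin 3 → V := fun i => ((b i : K) : V) with he_def
  have hve : ∀ i, ⟪v, e i⟫ = 0 := fun i =>
    Submodule.mem_orthogonal_singleton_iff_inner_right.mp (b i).2
  have hev : ∀ i, ⟪e i, v⟫ = 0 := fun i => by
    rw [real_inner_comm]; exact hve i
  have hee : ∀ i j, ⟪e i, e j⟫ = if i = j then (1 : ℝ) else 0 := by
    intro i j
    have h := orthonormal_iff_ite.mp b.orthonormal i j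
    rwa [Submodule.coe_inner] at h
  have hdec : ∀ u : V, ⟪v, u⟫ = 0 → ∃ a : Fin 3 → ℝ,
      u = a 0 • e 0 + a 1 • e 1 + a 2 • e 2 := by
    intro u hu
    have huK : u ∈ K := Submodule.mem_orthogonal_singleton_iff_inner_right.mpr hu
    refine ⟨fun i => b.toBasis.repr ⟨u, huK⟩ i, ?_⟩
    have h := b.toBasis.sum_repr ⟨u, huK⟩
    have h3 := congrArg (Subtype.val) h
    simp only [AddSubmonoidClass.coe_finset_sum, SetLike.val_smul,
      OrthonormalBasis.coe_toBasis, Fin.sum_univ_three] at h3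
    exact h3.symm
  set S₁ : Set E := {ξ : E | ∃ u : V, ⟪v, u⟫ = 0 ∧ ξ = w v u} with hS₁_def
  set S₂ : Set E := {ξ : E | ∃ u₁ u₂ : V, ⟪v, u₁⟫ = 0 ∧ ⟪v, u₂⟫ = 0 ∧ ξ = w u₁ u₂}
    with hS₂_def
  set F : Submodule ℝ E := Submodule.span ℝ S₁ with hF_def
  set G : Submodule ℝ E := Submodule.span ℝ S₂ with hG_def
  set f : Fin 3 → E := fun i => w v (e i) with hf_def
  set g : Fin 3 → E := ![w (e 0) (e 1), w (e 0) (e 2), w (e 1) (e 2)] with hg_def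
  -- every element of F has the form w v u with u ⊥ v
  have hF_form : ∀ ξ ∈ F, ∃ u : V, ⟪v, u⟫ = 0 ∧ ξ = w v u := by
    have hS₁' : S₁ = (w v) '' (K : Set V) := by
      ext ξ
      constructor
      · rintro ⟨u, hu, rfl⟩
        exact ⟨u, Submodule.mem_orthogonal_singleton_iff_inner_right.mpr hu, rfl⟩
      · rintro ⟨u, hu, rfl⟩
        exact ⟨u, Submodule.mem_orthogonal_singleton_iff_inner_right.mp hu, rfl⟩
    have hF_map : F = Submodule.map (w v) K := by
      rw [hF_def, hS₁', Submodule.span_image, Submodule.span_eq]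
    intro ξ hξ
    rw [hF_map] at hξ
    obtain ⟨u, hu, rfl⟩ := hξ
    exact ⟨u, Submodule.mem_orthogonal_singleton_iff_inner_right.mp hu, rfl⟩
  have hF_eq : F = Submodule.span ℝ (Set.range f) := by
    apply le_antisymm
    · rw [hF_def, Submodule.span_le]
      rintro ξ ⟨u, hu, rfl⟩
      obtain ⟨a, ha⟩ := hdec u hu
      rw [ha]
      simp only [map_add, map_smul]
      exact add_mem (add_mem
        (Submodule.smul_mem _ _ (Submodule.subset_span ⟨0, rfl⟩))
        (Submodule.smul_mem _ _ (Submodule.subset_span ⟨1, rfl⟩)))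
        (Submodule.smul_mem _ _ (Submodule.subset_span ⟨2, rfl⟩))
    · rw [Submodule.span_le]
      rintro _ ⟨i, rfl⟩
      exact Submodule.subset_span ⟨e i, hve i, rfl⟩
  have hfip : ∀ i j, ⟪f i, f j⟫ = if i = j then (1 : ℝ) else 0 := by
    intro i j
    rw [hf_def]
    simp only
    rw [hinner, hvv, hee, hve, hev]
    ring_nf
  have hgip : ∀ i j, ⟪g i, g j⟫ = if i = j then (1 : ℝ) else 0 := by
    intro i j
    fin_cases i <;> fin_cases j <;>
      simp [hg_def, hinner, hee, -inner_self_eq_norm_sq_to_K]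
  have hf_on : Orthonormal ℝ f := orthonormal_iff_ite.mpr hfip
  have hg_on : Orthonormal ℝ g := orthonormal_iff_ite.mpr hgip
  have h10 : w (e 1) (e 0) = - w (e 0) (e 1) := hanti _ _
  have h20 : w (e 2) (e 0) = - w (e 0) (e 2) := hanti _ _
  have h21 : w (e 2) (e 1) = - w (e 1) (e 2) := hanti _ _
  have hG_eq : G = Submodule.span ℝ (Set.range g) := by
    apply le_antisymm
    · rw [hG_def, Submodule.span_le]
      rintro ξ ⟨u₁, u₂, h1, h2, rfl⟩
      obtain ⟨a, ha⟩ := hdec u₁ h1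
      obtain ⟨c, hc⟩ := hdec u₂ h2
      have key : w u₁ u₂ = (a 0 * c 1 - a 1 * c 0) • g 0
          + (a 0 * c 2 - a 2 * c 0) • g 1 + (a 1 * c 2 - a 2 * c 1) • g 2 := by
        rw [ha, hc]
        simp only [hg_def, Matrix.cons_val_zero, Matrix.cons_val_one, Matrix.head_cons,
          Matrix.cons_val_two, Matrix.tail_cons, map_add, map_smul, LinearMap.add_apply,
          LinearMap.smul_apply, halt, h10, h20, h21, smul_neg, smul_zero]
        module
      rw [key]
      exact add_mem (add_mem
        (Submodule.smul_mem _ _ (Submodule.subset_span ⟨0, rfl⟩))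
        (Submodule.smul_mem _ _ (Submodule.subset_span ⟨1, rfl⟩)))
        (Submodule.smul_mem _ _ (Submodule.subset_span ⟨2, rfl⟩))
    · rw [Submodule.span_le]
      rintro _ ⟨i, rfl⟩
      fin_cases i
      · exact Submodule.subset_span ⟨e 0, e 1, hve 0, hve 1, by simp [hg_def]⟩
      · exact Submodule.subset_span ⟨e 0, e 2, hve 0, hve 2, by simp [hg_def]⟩
      · exact Submodule.subset_span ⟨e 1, e 2, hve 1, hve 2, by simp [hg_def]⟩
  -- Claim 1 : every element of G is simple
  have hGsimple : ∀ ξ ∈ G, ∃ x y : V, ξ = w x y := by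
    intro ξ hξ
    rw [hG_eq] at hξ
    obtain ⟨c, hc⟩ := (Submodule.mem_span_range_iff_exists_fun ℝ).mp hξ
    rw [Fin.sum_univ_three] at hc
    by_cases ha : c 0 = 0
    · refine ⟨c 1 • e 0 + c 2 • e 1, e 2, ?_⟩
      rw [← hc, ha]
      simp only [hg_def, Matrix.cons_val_zero, Matrix.cons_val_one, Matrix.head_cons,
        Matrix.cons_val_two, Matrix.tail_cons, map_add, map_smul, LinearMap.add_apply,
        LinearMap.smul_apply, zero_smul, zero_add]
    · refine ⟨c 0 • e 0 - c 2 • e 2, e 1 + (c 1 / c 0) • e 2, ?_⟩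
      rw [← hc]
      simp only [hg_def, Matrix.cons_val_zero, Matrix.cons_val_one, Matrix.head_cons,
        Matrix.cons_val_two, Matrix.tail_cons, map_add, map_sub, map_smul,
        LinearMap.add_apply, LinearMap.sub_apply, LinearMap.smul_apply, halt, h21,
        smul_neg, smul_zero]
      match_scalars <;> field_simp
  -- G ⊥ F
  have hGF : G ≤ Fᗮ := by
    rw [hG_def, Submodule.span_le]
    rintro ξ ⟨u₁, u₂, h1, h2, rfl⟩
    rw [SetLike.mem_coe, Submodule.mem_orthogonal]
    intro η hη
    obtain ⟨u, hu, rfl⟩ := hF_form η hη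
    rw [hinner, h1, h2]
    ring
  -- F ⊔ G = ⊤
  have hFG_top : F ⊔ G = ⊤ := by
    refine le_antisymm le_top ?_
    rw [← hspan, Submodule.span_le]
    rintro _ ⟨x, y, rfl⟩
    have hx' : ⟪v, x - ⟪v, x⟫ • v⟫ = 0 := by
      rw [inner_sub_right, real_inner_smul_right, hvv]; ring
    have hy' : ⟪v, y - ⟪v, y⟫ • v⟫ = 0 := by
      rw [inner_sub_right, real_inner_smul_right, hvv]; ring
    have hxv : w x v = - w v x := hanti _ _
    have hyv : w y v = - w v y := hanti _ _
    have key : w x y = ⟪v, x⟫ • w v (y - ⟪v, y⟫ • v) - ⟪v, y⟫ • w v (x - ⟪v, x⟫ • v)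
        + w (x - ⟪v, x⟫ • v) (y - ⟪v, y⟫ • v) := by
      simp only [map_sub, map_smul, LinearMap.sub_apply, LinearMap.smul_apply, halt,
        hxv, hyv, smul_neg, smul_zero]
      module
    rw [key]
    refine add_mem (sub_mem
      (Submodule.smul_mem _ _ (Submodule.mem_sup_left (Submodule.subset_span ⟨_, hy', rfl⟩)))
      (Submodule.smul_mem _ _ (Submodule.mem_sup_left (Submodule.subset_span ⟨_, hx', rfl⟩))))
      (Submodule.mem_sup_right (Submodule.subset_span ⟨_, _, hx', hy', rfl⟩))
  -- G is exactly the orthogonal complement of F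
  have hG_orth : G = Fᗮ := by
    refine le_antisymm hGF ?_
    intro ξ hξ
    have hξ' : ξ ∈ F ⊔ G := by rw [hFG_top]; trivial
    obtain ⟨p, hp, q, hq, rfl⟩ := Submodule.mem_sup.mp hξ'
    have hpF : p ∈ Fᗮ := by
      have : p = (p + q) - q := by abel
      rw [this]
      exact sub_mem hξ (hGF hq)
    have hp0 : p = 0 := Submodule.disjoint_def.mp F.orthogonal_disjoint p hp hpF
    rw [hp0, zero_add]
    exact hq
  -- W leaves G invariant
  have hWG : ∀ ξ ∈ G, W ξ ∈ G := by
    intro ξ hξ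
    rw [hG_orth] at hξ ⊢
    rw [Submodule.mem_orthogonal] at hξ ⊢
    intro η hη
    rw [← hW η ξ]
    exact hξ _ (hinv η hη)
  have hWF : ∀ ξ ∈ F, W ξ ∈ F := hinv
  have hF3 : Module.finrank ℝ F = 3 := by
    rw [hF_eq, finrank_span_eq_card hf_on.linearIndependent]
    simp
  have hG3 : Module.finrank ℝ G = 3 := by
    rw [hG_eq, finrank_span_eq_card hg_on.linearIndependent]
    simp
  -- diagonalize on F and on G
  have hWFsym : (W.restrict hWF).IsSymmetric := hW.restrict_invariant hWF
  have hWGsym : (W.restrict hWG).IsSymmetric := hW.restrict_invariant hWG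
  set bF := hWFsym.eigenvectorBasis hF3 with hbF_def
  set bG := hWGsym.eigenvectorBasis hG3 with hbG_def
  have heigF : ∀ i, W (bF i : E) = hWFsym.eigenvalues hF3 i • (bF i : E) := by
    intro i
    have h2 := congrArg (Subtype.val) (hWFsym.apply_eigenvectorBasis hF3 i)
    rw [LinearMap.restrict_coe_apply] at h2
    exact h2
  have heigG : ∀ i, W (bG i : E) = hWGsym.eigenvalues hG3 i • (bG i : E) := by
    intro i
    have h2 := congrArg (Subtype.val) (hWGsym.apply_eigenvectorBasis hG3 i)
    rw [LinearMap.restrict_coe_apply] at h2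
    exact h2
  have hbF_on : ∀ i j, ⟪(bF i : E), (bF j : E)⟫ = if i = j then (1 : ℝ) else 0 := by
    intro i j
    have h := orthonormal_iff_ite.mp bF.orthonormal i j
    rwa [Submodule.coe_inner] at h
  have hbG_on : ∀ i j, ⟪(bG i : E), (bG j : E)⟫ = if i = j then (1 : ℝ) else 0 := by
    intro i j
    have h := orthonormal_iff_ite.mp bG.orthonormal i j
    rwa [Submodule.coe_inner] at h
  have hcross : ∀ i j, ⟪(bF i : E), (bG j : E)⟫ = 0 := by
    intro i j
    have h : (bG j : E) ∈ Fᗮ := by rw [← hG_orth]; exact (bG j).2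
    exact Submodule.mem_orthogonal F _ |>.mp h _ (bF i).2
  have hcross' : ∀ i j, ⟪(bG i : E), (bF j : E)⟫ = 0 := by
    intro i j
    rw [real_inner_comm]
    exact hcross j i
  refine ⟨hGsimple, ?_⟩
  have hPF : ∀ k : Fin 3, (∃ x y : V, (bF k : E) = w x y) ∧
      ∃ μ : ℝ, W (bF k : E) = μ • (bF k : E) := by
    intro k
    obtain ⟨u, _, hu⟩ := hF_form _ (bF k).2
    exact ⟨⟨v, u, hu⟩, _, heigF k⟩
  have hPG : ∀ k : Fin 3, (∃ x y : V, (bG k : E) = w x y) ∧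
      ∃ μ : ℝ, W (bG k : E) = μ • (bG k : E) :=
    fun k => ⟨hGsimple _ (bG k).2, _, heigG k⟩
  refine ⟨fun i : Fin 6 => if h : (i : ℕ) < 3 then ((bF ⟨(i : ℕ), h⟩ : F) : E)
      else ((bG ⟨(i : ℕ) - 3, by omega⟩ : G) : E), ?_, ?_, ?_⟩
  · -- linear independence
    refine Orthonormal.linearIndependent (orthonormal_iff_ite.mpr ?_)
    intro i j
    by_cases hi : (i : ℕ) < 3 <;> by_cases hj : (j : ℕ) < 3 <;>
      simp only [hi, hj, dif_pos, dif_neg, not_lt, dite_true, dite_false]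
    · rw [hbF_on]
      exact if_congr (by simp [Fin.ext_iff]) rfl rfl
    · rw [hcross, if_neg (by rintro rfl; exact hj hi)]
    · rw [hcross', if_neg (by rintro rfl; exact hi hj)]
    · rw [hbG_on]
      refine if_congr ⟨fun h => ?_, fun h => ?_⟩ rfl rfl
      · have h2 : (i : ℕ) - 3 = (j : ℕ) - 3 := congrArg Fin.val h
        have hi' := not_lt.mp hi
        have hj' := not_lt.mp hj
        exact Fin.ext (by omega)
      · refine Fin.ext ?_
        have h2 : (i : ℕ) = (j : ℕ) := congrArg Fin.val h
        show (i : ℕ) - 3 = (j : ℕ) - 3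
        omega
  · -- spanning
    refine le_antisymm le_top ?_
    rw [← hFG_top]
    have hFspan : Submodule.span ℝ (Set.range (fun i => (bF i : E))) = F := by
      have h1 : Set.range (fun i => (bF i : E)) = F.subtype '' Set.range bF.toBasis := by
        rw [← Set.range_comp]
        exact congrArg Set.range (by funext i; simp)
      rw [h1, Submodule.span_image, bF.toBasis.span_eq, Submodule.map_subtype_top]
    have hGspan : Submodule.span ℝ (Set.range (fun i => (bG i : E))) = G := by
      have h1 : Set.range (fun i => (bG i : E)) = G.subtype '' Set.range bG.toBasis := by
        rw [← Set.range_comp]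
        exact congrArg Set.range (by funext i; simp)
      rw [h1, Submodule.span_image, bG.toBasis.span_eq, Submodule.map_subtype_top]
    refine sup_le ?_ ?_
    · refine le_trans hFspan.ge (Submodule.span_mono ?_)
      rintro _ ⟨k, rfl⟩
      refine ⟨⟨(k : ℕ), by omega⟩, ?_⟩
      dsimp only
      rw [dif_pos (show ((⟨(k : ℕ), by omega⟩ : Fin 6) : ℕ) < 3 from k.2)]
    · refine le_trans hGspan.ge (Submodule.span_mono ?_)
      rintro _ ⟨k, rfl⟩
      refine ⟨⟨(k : ℕ) + 3, by omega⟩, ?_⟩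
      dsimp only
      rw [dif_neg (show ¬ ((⟨(k : ℕ) + 3, by omega⟩ : Fin 6) : ℕ) < 3 by simp)]
      exact congrArg _ (congrArg _ (Fin.ext (by simp)))
  · -- each basis vector is a simple eigenvector
    intro i
    dsimp only
    by_cases hi : (i : ℕ) < 3
    · rw [dif_pos hi]
      exact hPF _
    · rw [dif_neg hi]
      exact hPG _
end

section
/- Let W be a symmetric endomorphism of Λ²V for V a 4-dimensional oriented real inner product space, such that W preserves both Λ⁺ and Λ⁻ (i.e., W = W⁺ ⊕ W⁻). If all six eigenvalues of W are distinct, then no eigenvector of W is a simple bivector, and consequently there is no unit vector v ∈ V with W(v ∧ v⊥) ⊆ v ∧ v⊥. -/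
open scoped RealInnerProductSpace

/-- The pairing `⟨a∧b∧c∧d, e₁∧e₂∧e₃∧e₄⟩`: the determinant of the matrix of coordinates
of `a, b, c, d` in the oriented orthonormal basis `e`. -/
noncomputable def quadDet {V : Type*} [NormedAddCommGroup V] [InnerProductSpace ℝ V]
    (e : OrthonormalBasis (Fin 4) ℝ V) (a b c d : V) : ℝ :=
  Matrix.det (Matrix.of
    ![fun j => ⟪e j, a⟫, fun j => ⟪e j, b⟫, fun j => ⟪e j, c⟫, fun j => ⟪e j, d⟫])

private lemma det_fin_four' {R : Type*} [CommRing R] (M : Matrix (Fin 4) (Fin 4) R) :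
    M.det =
      M 0 0 * (M 1 1 * (M 2 2 * M 3 3 - M 2 3 * M 3 2) - M 1 2 * (M 2 1 * M 3 3 - M 2 3 * M 3 1)
        + M 1 3 * (M 2 1 * M 3 2 - M 2 2 * M 3 1))
    - M 0 1 * (M 1 0 * (M 2 2 * M 3 3 - M 2 3 * M 3 2) - M 1 2 * (M 2 0 * M 3 3 - M 2 3 * M 3 0)
        + M 1 3 * (M 2 0 * M 3 2 - M 2 2 * M 3 0))
    + M 0 2 * (M 1 0 * (M 2 1 * M 3 3 - M 2 3 * M 3 1) - M 1 1 * (M 2 0 * M 3 3 - M 2 3 * M 3 0)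
        + M 1 3 * (M 2 0 * M 3 1 - M 2 1 * M 3 0))
    - M 0 3 * (M 1 0 * (M 2 1 * M 3 2 - M 2 2 * M 3 1) - M 1 1 * (M 2 0 * M 3 2 - M 2 2 * M 3 0)
        + M 1 2 * (M 2 0 * M 3 1 - M 2 1 * M 3 0)) := by
  have h1 : (Fin.succ 2 : Fin 4) = 3 := rfl
  have h2 : (Fin.succAbove 2 2 : Fin 4) = 3 := rfl
  have h3 : (Fin.succAbove 1 2 : Fin 4) = 3 := rfl
  have h4 : (Fin.castSucc 2 : Fin 4) = 2 := rfl
  have h5 : (Fin.succAbove 3 2 : Fin 4) = 2 := rfl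
  simp [Matrix.det_succ_row_zero, Matrix.det_fin_three, Fin.sum_univ_succ, h1, h2, h3, h4, h5]
  ring

section QuadDet

variable {V : Type*} [NormedAddCommGroup V] [InnerProductSpace ℝ V]
  (e : OrthonormalBasis (Fin 4) ℝ V)

private lemma quadDet_swap (a b c d : V) : quadDet e a b c d = quadDet e c d a b := by
  simp only [quadDet, det_fin_four', Matrix.of_apply, Matrix.cons_val_zero, Matrix.cons_val_one,
    Matrix.head_cons, Matrix.cons_val_two, Matrix.cons_val_three, Matrix.tail_cons,
    Matrix.head_fin_const]
  ring

private lemma quadDet_self (a b : V) : quadDet e a b a b = 0 := by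
  simp only [quadDet, det_fin_four', Matrix.of_apply, Matrix.cons_val_zero, Matrix.cons_val_one,
    Matrix.head_cons, Matrix.cons_val_two, Matrix.cons_val_three, Matrix.tail_cons,
    Matrix.head_fin_const]
  ring


private lemma quadDet_pair_01 (a b : V) :
    quadDet e a b (e 0) (e 1) = ⟪e 2, a⟫ * ⟪e 3, b⟫ - ⟪e 3, a⟫ * ⟪e 2, b⟫ := by
  have hd : ∀ k i : Fin 4, ⟪e k, e i⟫ = if k = i then (1:ℝ) else 0 :=
    fun k i => orthonormal_iff_ite.mp e.orthonormal k i
  simp only [quadDet, det_fin_four', Matrix.of_apply, Matrix.cons_val_zero, Matrix.cons_val_one,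
    Matrix.head_cons, Matrix.cons_val_two, Matrix.cons_val_three, Matrix.tail_cons,
    Matrix.head_fin_const, hd]
  simp only [Fin.reduceEq, reduceIte]
  ring

private lemma quadDet_pair_02 (a b : V) :
    quadDet e a b (e 0) (e 2) = -(⟪e 1, a⟫ * ⟪e 3, b⟫ - ⟪e 3, a⟫ * ⟪e 1, b⟫) := by
  have hd : ∀ k i : Fin 4, ⟪e k, e i⟫ = if k = i then (1:ℝ) else 0 :=
    fun k i => orthonormal_iff_ite.mp e.orthonormal k i
  simp only [quadDet, det_fin_four', Matrix.of_apply, Matrix.cons_val_zero, Matrix.cons_val_one,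
    Matrix.head_cons, Matrix.cons_val_two, Matrix.cons_val_three, Matrix.tail_cons,
    Matrix.head_fin_const, hd]
  simp only [Fin.reduceEq, reduceIte]
  ring

private lemma quadDet_pair_03 (a b : V) :
    quadDet e a b (e 0) (e 3) = ⟪e 1, a⟫ * ⟪e 2, b⟫ - ⟪e 2, a⟫ * ⟪e 1, b⟫ := by
  have hd : ∀ k i : Fin 4, ⟪e k, e i⟫ = if k = i then (1:ℝ) else 0 :=
    fun k i => orthonormal_iff_ite.mp e.orthonormal k i
  simp only [quadDet, det_fin_four', Matrix.of_apply, Matrix.cons_val_zero, Matrix.cons_val_one,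
    Matrix.head_cons, Matrix.cons_val_two, Matrix.cons_val_three, Matrix.tail_cons,
    Matrix.head_fin_const, hd]
  simp only [Fin.reduceEq, reduceIte]
  ring

private lemma quadDet_pair_12 (a b : V) :
    quadDet e a b (e 1) (e 2) = ⟪e 0, a⟫ * ⟪e 3, b⟫ - ⟪e 3, a⟫ * ⟪e 0, b⟫ := by
  have hd : ∀ k i : Fin 4, ⟪e k, e i⟫ = if k = i then (1:ℝ) else 0 :=
    fun k i => orthonormal_iff_ite.mp e.orthonormal k i
  simp only [quadDet, det_fin_four', Matrix.of_apply, Matrix.cons_val_zero, Matrix.cons_val_one,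
    Matrix.head_cons, Matrix.cons_val_two, Matrix.cons_val_three, Matrix.tail_cons,
    Matrix.head_fin_const, hd]
  simp only [Fin.reduceEq, reduceIte]
  ring

private lemma quadDet_pair_13 (a b : V) :
    quadDet e a b (e 1) (e 3) = -(⟪e 0, a⟫ * ⟪e 2, b⟫ - ⟪e 2, a⟫ * ⟪e 0, b⟫) := by
  have hd : ∀ k i : Fin 4, ⟪e k, e i⟫ = if k = i then (1:ℝ) else 0 :=
    fun k i => orthonormal_iff_ite.mp e.orthonormal k i
  simp only [quadDet, det_fin_four', Matrix.of_apply, Matrix.cons_val_zero, Matrix.cons_val_one,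
    Matrix.head_cons, Matrix.cons_val_two, Matrix.cons_val_three, Matrix.tail_cons,
    Matrix.head_fin_const, hd]
  simp only [Fin.reduceEq, reduceIte]
  ring

private lemma quadDet_pair_23 (a b : V) :
    quadDet e a b (e 2) (e 3) = ⟪e 0, a⟫ * ⟪e 1, b⟫ - ⟪e 1, a⟫ * ⟪e 0, b⟫ := by
  have hd : ∀ k i : Fin 4, ⟪e k, e i⟫ = if k = i then (1:ℝ) else 0 :=
    fun k i => orthonormal_iff_ite.mp e.orthonormal k i
  simp only [quadDet, det_fin_four', Matrix.of_apply, Matrix.cons_val_zero, Matrix.cons_val_one,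
    Matrix.head_cons, Matrix.cons_val_two, Matrix.cons_val_three, Matrix.tail_cons,
    Matrix.head_fin_const, hd]
  simp only [Fin.reduceEq, reduceIte]
  ring

private lemma quadDet_laplace (a b c d : V) :
    quadDet e a b c d =
      quadDet e a b (e 0) (e 1) * (⟪e 0, c⟫ * ⟪e 1, d⟫ - ⟪e 0, d⟫ * ⟪e 1, c⟫)
    + quadDet e a b (e 0) (e 2) * (⟪e 0, c⟫ * ⟪e 2, d⟫ - ⟪e 0, d⟫ * ⟪e 2, c⟫)
    + quadDet e a b (e 0) (e 3) * (⟪e 0, c⟫ * ⟪e 3, d⟫ - ⟪e 0, d⟫ * ⟪e 3, c⟫)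
    + quadDet e a b (e 1) (e 2) * (⟪e 1, c⟫ * ⟪e 2, d⟫ - ⟪e 1, d⟫ * ⟪e 2, c⟫)
    + quadDet e a b (e 1) (e 3) * (⟪e 1, c⟫ * ⟪e 3, d⟫ - ⟪e 1, d⟫ * ⟪e 3, c⟫)
    + quadDet e a b (e 2) (e 3) * (⟪e 2, c⟫ * ⟪e 3, d⟫ - ⟪e 2, d⟫ * ⟪e 3, c⟫) := by
  rw [quadDet_pair_01, quadDet_pair_02, quadDet_pair_03, quadDet_pair_12, quadDet_pair_13,
    quadDet_pair_23]
  simp only [quadDet, det_fin_four', Matrix.of_apply, Matrix.cons_val_zero, Matrix.cons_val_one,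
    Matrix.head_cons, Matrix.cons_val_two, Matrix.cons_val_three, Matrix.tail_cons,
    Matrix.head_fin_const]
  ring

private lemma quadDet_lagrange (a b c d : V) :
      quadDet e a b (e 0) (e 1) * quadDet e c d (e 0) (e 1)
    + quadDet e a b (e 0) (e 2) * quadDet e c d (e 0) (e 2)
    + quadDet e a b (e 0) (e 3) * quadDet e c d (e 0) (e 3)
    + quadDet e a b (e 1) (e 2) * quadDet e c d (e 1) (e 2)
    + quadDet e a b (e 1) (e 3) * quadDet e c d (e 1) (e 3)
    + quadDet e a b (e 2) (e 3) * quadDet e c d (e 2) (e 3)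
    = ⟪a, c⟫ * ⟪b, d⟫ - ⟪a, d⟫ * ⟪b, c⟫ := by
  have par : ∀ x y : V, ⟪x, y⟫ = ∑ i, ⟪e i, x⟫ * ⟪e i, y⟫ := by
    intro x y
    rw [← OrthonormalBasis.sum_inner_mul_inner e x y]
    exact Finset.sum_congr rfl fun i _ => by rw [real_inner_comm x (e i)]
  rw [quadDet_pair_01, quadDet_pair_02, quadDet_pair_03, quadDet_pair_12, quadDet_pair_13,
    quadDet_pair_23, quadDet_pair_01, quadDet_pair_02, quadDet_pair_03, quadDet_pair_12,
    quadDet_pair_13, quadDet_pair_23, par a c, par b d, par a d, par b c]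
  simp only [Fin.sum_univ_four]
  ring

end QuadDet

/-- Let `W` be a symmetric endomorphism of `Λ²V`, for `V` a 4-dimensional oriented real
inner product space (with `Λ²V` modelled by `E` via the alternating map `w` and Hodge
star `hodge`), preserving both `Λ⁺` and `Λ⁻`.  If all six eigenvalues of `W` are
distinct, then no eigenvector of `W` is a simple bivector, and consequently there is no
unit vector `v ∈ V` with `W(v ∧ v⊥) ⊆ v ∧ v⊥`. -/
theorem distinct_eigenvalues_no_simple_eigenvector_no_eigenflag
    {V E : Type*} [NormedAddCommGroup V] [InnerProductSpace ℝ V]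
    [NormedAddCommGroup E] [InnerProductSpace ℝ E]
    [FiniteDimensional ℝ V] [FiniteDimensional ℝ E]
    (e : OrthonormalBasis (Fin 4) ℝ V)
    (w : V →ₗ[ℝ] V →ₗ[ℝ] E)
    (halt : ∀ x : V, w x x = 0)
    (hinner : ∀ a b c d : V, ⟪w a b, w c d⟫ = ⟪a, c⟫ * ⟪b, d⟫ - ⟪a, d⟫ * ⟪b, c⟫)
    (hspan : Submodule.span ℝ {ξ : E | ∃ x y : V, ξ = w x y} = ⊤)
    (hodge : E →ₗ[ℝ] E)
    (hhodge : ∀ a b c d : V, ⟪hodge (w a b), w c d⟫ = quadDet e a b c d)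
    (W : E →ₗ[ℝ] E) (hW : W.IsSymmetric)
    (hWp : ∀ ξ ∈ Module.End.eigenspace hodge (1 : ℝ),
      W ξ ∈ Module.End.eigenspace hodge (1 : ℝ))
    (hWm : ∀ ξ ∈ Module.End.eigenspace hodge (-1 : ℝ),
      W ξ ∈ Module.End.eigenspace hodge (-1 : ℝ))
    (hdistinct : ∃ μ : Fin 6 → ℝ, Function.Injective μ ∧
      ∃ s : Fin 6 → E, (∀ i, s i ≠ 0 ∧ W (s i) = μ i • s i) ∧
        Submodule.span ℝ (Set.range s) = ⊤) :
    (∀ (ξ : E) (μ : ℝ), ξ ≠ 0 → W ξ = μ • ξ → ¬ ∃ x y : V, ξ = w x y) ∧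
    ¬ ∃ v : V, ‖v‖ = 1 ∧
      ∀ ξ ∈ Submodule.span ℝ {ξ : E | ∃ u : V, ⟪v, u⟫ = 0 ∧ ξ = w v u},
        W ξ ∈ Submodule.span ℝ {ξ : E | ∃ u : V, ⟪v, u⟫ = 0 ∧ ξ = w v u} := by
  obtain ⟨μs, hμinj, s, hs, hsspan⟩ := hdistinct
  -- nondegeneracy of the inner product against simple bivectors
  have nondeg : ∀ η : E, (∀ c d : V, ⟪η, w c d⟫ = 0) → η = 0 := by
    intro η hη
    have h1 : ∀ ξ ∈ Submodule.span ℝ {ξ : E | ∃ x y : V, ξ = w x y}, ⟪η, ξ⟫ = 0 := by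
      intro ξ hξ
      induction hξ using Submodule.span_induction with
      | mem x hx => obtain ⟨a, b, rfl⟩ := hx; exact hη a b
      | zero => simp
      | add x y hx hy ihx ihy => rw [inner_add_right, ihx, ihy]; ring
      | smul t x hx ih => rw [real_inner_smul_right, ih]; ring
    exact inner_self_eq_zero.mp (h1 η (hspan ▸ Submodule.mem_top))
  -- hodge is symmetric
  have hsymm : ∀ ξ η : E, ⟪hodge ξ, η⟫ = ⟪ξ, hodge η⟫ := by
    have gen : ∀ (a b : V) (η : E), η ∈ Submodule.span ℝ {ξ : E | ∃ x y : V, ξ = w x y} →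
        ⟪hodge (w a b), η⟫ = ⟪w a b, hodge η⟫ := by
      intro a b η hη
      induction hη using Submodule.span_induction with
      | mem x hx =>
        obtain ⟨c, d, rfl⟩ := hx
        rw [hhodge, real_inner_comm, hhodge, quadDet_swap e a b c d]
      | zero => simp
      | add x y hx hy ihx ihy =>
        rw [inner_add_right, map_add, inner_add_right, ihx, ihy]
      | smul t x hx ih =>
        rw [real_inner_smul_right, map_smul, real_inner_smul_right, ih]
    intro ξ η
    have hξ : ξ ∈ Submodule.span ℝ {ξ : E | ∃ x y : V, ξ = w x y} := hspan ▸ Submodule.mem_top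
    induction hξ using Submodule.span_induction with
    | mem x hx => obtain ⟨a, b, rfl⟩ := hx; exact gen a b η (hspan ▸ Submodule.mem_top)
    | zero => simp
    | add x y hx hy ihx ihy => rw [inner_add_left, map_add, inner_add_left, ihx, ihy]
    | smul t x hx ih => rw [real_inner_smul_left, map_smul, real_inner_smul_left, ih]
  -- the expansion of hodge on simple bivectors
  have hexp : ∀ a b : V, hodge (w a b) =
      quadDet e a b (e 0) (e 1) • w (e 0) (e 1) + quadDet e a b (e 0) (e 2) • w (e 0) (e 2)
    + quadDet e a b (e 0) (e 3) • w (e 0) (e 3) + quadDet e a b (e 1) (e 2) • w (e 1) (e 2)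
    + quadDet e a b (e 1) (e 3) • w (e 1) (e 3) + quadDet e a b (e 2) (e 3) • w (e 2) (e 3) := by
    intro a b
    have key : ∀ c d : V, ⟪hodge (w a b) -
        (quadDet e a b (e 0) (e 1) • w (e 0) (e 1) + quadDet e a b (e 0) (e 2) • w (e 0) (e 2)
       + quadDet e a b (e 0) (e 3) • w (e 0) (e 3) + quadDet e a b (e 1) (e 2) • w (e 1) (e 2)
       + quadDet e a b (e 1) (e 3) • w (e 1) (e 3) + quadDet e a b (e 2) (e 3) • w (e 2) (e 3)),
        w c d⟫ = 0 := by
      intro c d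
      have hd : ∀ k i : Fin 4, ⟪e k, e i⟫ = if k = i then (1:ℝ) else 0 :=
        fun k i => orthonormal_iff_ite.mp e.orthonormal k i
      rw [inner_sub_left, hhodge]
      simp only [inner_add_left, real_inner_smul_left, hinner]
      rw [quadDet_laplace e a b c d]
      ring
    exact sub_eq_zero.mp (nondeg _ key)
  -- hodge is an involution
  have hsq : ∀ ξ : E, hodge (hodge ξ) = ξ := by
    have gen : ∀ a b : V, hodge (hodge (w a b)) = w a b := by
      intro a b
      have key : ∀ c d : V, ⟪hodge (hodge (w a b)) - w a b, w c d⟫ = 0 := by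
        intro c d
        have hd : ∀ k i : Fin 4, ⟪e k, e i⟫ = if k = i then (1:ℝ) else 0 :=
          fun k i => orthonormal_iff_ite.mp e.orthonormal k i
        rw [inner_sub_left, hsymm, hexp a b, hexp c d]
        simp only [map_add, map_smul, inner_add_left, inner_add_right, real_inner_smul_left,
          real_inner_smul_right, hinner, hd]
        simp only [Fin.reduceEq, reduceIte]
        have := quadDet_lagrange e a b c d
        nlinarith [this]
      exact sub_eq_zero.mp (nondeg _ key)
    intro ξ
    have hξ : ξ ∈ Submodule.span ℝ {ξ : E | ∃ x y : V, ξ = w x y} := hspan ▸ Submodule.mem_top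
    induction hξ using Submodule.span_induction with
    | mem x hx => obtain ⟨a, b, rfl⟩ := hx; exact gen a b
    | zero => simp
    | add x y hx hy ihx ihy => rw [map_add, map_add, ihx, ihy]
    | smul t x hx ih => rw [map_smul, map_smul, ih]
  -- Part 1
  have part1 : ∀ (ξ : E) (μ : ℝ), ξ ≠ 0 → W ξ = μ • ξ → ¬ ∃ x y : V, ξ = w x y := by
    rintro ξ μ hne hWξ ⟨x, y, rfl⟩
    set p : E := (2:ℝ)⁻¹ • (w x y + hodge (w x y)) with hp
    set m : E := (2:ℝ)⁻¹ • (w x y - hodge (w x y)) with hm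
    have hps : hodge p = p := by
      rw [hp, map_smul, map_add, hsq]
      congr 1
      abel
    have hms : hodge m = -m := by
      rw [hm, map_smul, map_sub, hsq, ← smul_neg]
      congr 1
      abel
    have hsum : p + m = w x y := by
      rw [hp, hm, ← smul_add]
      have : w x y + hodge (w x y) + (w x y - hodge (w x y)) = (2:ℝ) • w x y := by
        rw [two_smul]; abel
      rw [this, smul_smul]
      norm_num
    have hzero : ⟪hodge (w x y), w x y⟫ = 0 := by rw [hhodge]; exact quadDet_self e x y
    have hzero' : ⟪w x y, hodge (w x y)⟫ = 0 := by rw [real_inner_comm]; exact hzero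
    have hnorm : ⟪hodge (w x y), hodge (w x y)⟫ = ⟪w x y, w x y⟫ := by rw [hsymm, hsq]
    have hpp : ⟪p, p⟫ = 2⁻¹ * ⟪w x y, w x y⟫ := by
      rw [hp]
      simp only [real_inner_smul_left, real_inner_smul_right, inner_add_left, inner_add_right,
        hzero, hzero', hnorm]
      ring
    have hmm : ⟪m, m⟫ = 2⁻¹ * ⟪w x y, w x y⟫ := by
      rw [hm]
      simp only [real_inner_smul_left, real_inner_smul_right, inner_sub_left, inner_sub_right,
        hzero, hzero', hnorm]
      ring
    have hpm : ⟪p, m⟫ = 0 := by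
      rw [hp, hm]
      simp only [real_inner_smul_left, real_inner_smul_right, inner_add_left, inner_sub_right,
        hzero, hzero', hnorm]
      ring
    have hwne : ⟪w x y, w x y⟫ ≠ 0 := fun h => hne (inner_self_eq_zero.mp h)
    have hpne : p ≠ 0 := by
      intro h
      rw [h, inner_zero_left] at hpp
      exact hwne (by linarith [hpp.symm])
    have hmne : m ≠ 0 := by
      intro h
      rw [h, inner_zero_left] at hmm
      exact hwne (by linarith [hmm.symm])
    have hpmem : p ∈ Module.End.eigenspace hodge (1 : ℝ) :=
      Module.End.mem_eigenspace_iff.mpr (by rw [hps, one_smul])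
    have hmmem : m ∈ Module.End.eigenspace hodge (-1 : ℝ) :=
      Module.End.mem_eigenspace_iff.mpr (by rw [hms, neg_one_smul])
    -- W p = μ • p and W m = μ • m
    have hWpm : W p = μ • p ∧ W m = μ • m := by
      have hu : W p - μ • p ∈ Module.End.eigenspace hodge (1 : ℝ) :=
        Submodule.sub_mem _ (hWp _ hpmem) (Submodule.smul_mem _ _ hpmem)
      have hv : W m - μ • m ∈ Module.End.eigenspace hodge (-1 : ℝ) :=
        Submodule.sub_mem _ (hWm _ hmmem) (Submodule.smul_mem _ _ hmmem)
      have huv : (W p - μ • p) + (W m - μ • m) = 0 := by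
        have : W p + W m = μ • p + μ • m := by
          rw [← map_add, hsum, hWξ, ← smul_add, hsum]
        rw [sub_add_sub_comm, this, sub_self]
      have h2 : hodge (W p - μ • p) = W p - μ • p := by
        have := Module.End.mem_eigenspace_iff.mp hu; rw [this, one_smul]
      have h3 : hodge (W m - μ • m) = -(W m - μ • m) := by
        have := Module.End.mem_eigenspace_iff.mp hv; rw [this, neg_one_smul]
      have h4 : W p - μ • p = -(W m - μ • m) := by
        rw [eq_neg_iff_add_eq_zero]; exact huv
      have h5 : W p - μ • p = 0 := by
        have h6 : hodge (W p - μ • p) = -(W p - μ • p) := by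
          rw [h4, map_neg, h3, neg_neg]
        have := h2.symm.trans h6
        have h7 : (2:ℝ) • (W p - μ • p) = 0 := by
          rw [two_smul]
          nth_rewrite 1 [this]
          abel
        simpa using smul_eq_zero.mp h7
      refine ⟨sub_eq_zero.mp h5, sub_eq_zero.mp ?_⟩
      have := h4.symm.trans h5
      rwa [neg_eq_zero] at this
    obtain ⟨hWp', hWm'⟩ := hWpm
    -- the eigenvectors form a basis
    have hli : LinearIndependent ℝ s :=
      Module.End.eigenvectors_linearIndependent' W μs hμinj s
        (fun i => ⟨Module.End.mem_eigenspace_iff.mpr (hs i).2, (hs i).1⟩)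
    let b : Module.Basis (Fin 6) ℝ E := Module.Basis.mk hli (by rw [hsspan])
    have hb : ∀ i, b i = s i := fun i => Module.Basis.mk_apply hli _ i
    -- any eigenvector has coefficients supported on matching eigenvalues
    have coeff : ∀ (η : E) (ν : ℝ), W η = ν • η → ∀ j, μs j ≠ ν → b.repr η j = 0 := by
      intro η ν hη j hj
      have h1 : η = ∑ i, b.repr η i • s i := by
        conv_lhs => rw [← Module.Basis.sum_repr b η]
        exact Finset.sum_congr rfl fun i _ => by rw [hb]
      have h4 : ∑ i, (b.repr η i * μs i - ν * b.repr η i) • s i = 0 := by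
        have h2 : W η = ∑ i, (b.repr η i * μs i) • s i := by
          conv_lhs => rw [h1]
          rw [map_sum]
          exact Finset.sum_congr rfl fun i _ => by
            rw [map_smul, (hs i).2, smul_smul]
        have h3 : ν • η = ∑ i, (ν * b.repr η i) • s i := by
          conv_lhs => rw [h1]
          rw [Finset.smul_sum]
          exact Finset.sum_congr rfl fun i _ => by rw [smul_smul]
        rw [← hη] at h3
        calc ∑ i, (b.repr η i * μs i - ν * b.repr η i) • s i
            = ∑ i, ((b.repr η i * μs i) • s i - (ν * b.repr η i) • s i) := by
              exact Finset.sum_congr rfl fun i _ => by rw [sub_smul]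
          _ = (∑ i, (b.repr η i * μs i) • s i) - ∑ i, (ν * b.repr η i) • s i := by
              rw [Finset.sum_sub_distrib]
          _ = 0 := by rw [← h2, ← h3, sub_self]
      have h5 := linearIndependent_iff'.mp hli Finset.univ _ h4 j (Finset.mem_univ j)
      have h6 : b.repr η j * (μs j - ν) = 0 := by linarith [h5]
      rcases mul_eq_zero.mp h6 with h | h
      · exact h
      · exact absurd (by linarith [h]) hj
    -- there is an index whose eigenvalue is μ
    have hj0 : ∃ j, μs j = μ := by
      by_contra hcon
      push_neg at hcon
      have : b.repr p = 0 := Finsupp.ext fun j => coeff p μ hWp' j (hcon j)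
      exact hpne ((Module.Basis.repr b).map_eq_zero_iff.mp this)
    obtain ⟨j₀, hj₀⟩ := hj0
    have single : ∀ (η : E) , W η = μ • η → η = b.repr η j₀ • s j₀ := by
      intro η hη
      have h2 : ∀ i, i ≠ j₀ → b.repr η i = 0 :=
        fun i hi => coeff η μ hη i (fun h => hi (hμinj (h.trans hj₀.symm)))
      calc η = ∑ i, b.repr η i • b i := (Module.Basis.sum_repr b η).symm
        _ = b.repr η j₀ • s j₀ := by
            rw [Finset.sum_eq_single j₀ (fun i _ hi => by rw [h2 i hi, zero_smul])
              (fun h => absurd (Finset.mem_univ j₀) h), hb]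
    have hpj := single p hWp'
    have hmj := single m hWm'
    have hcp : b.repr p j₀ ≠ 0 := fun h => hpne (by rw [hpj, h, zero_smul])
    have hcm : b.repr m j₀ ≠ 0 := fun h => hmne (by rw [hmj, h, zero_smul])
    have hinner0 : ⟪p, m⟫ = b.repr p j₀ * (b.repr m j₀ * ⟪s j₀, s j₀⟫) := by
      nth_rewrite 1 [hpj, hmj]
      rw [real_inner_smul_left, real_inner_smul_right]
    rw [hpm] at hinner0
    have hs0 : ⟪s j₀, s j₀⟫ = (0:ℝ) := by
      rcases mul_eq_zero.mp hinner0.symm with h | h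
      · exact absurd h hcp
      · rcases mul_eq_zero.mp h with h' | h'
        · exact absurd h' hcm
        · exact h'
    exact (hs j₀).1 (inner_self_eq_zero.mp hs0)
  refine ⟨part1, ?_⟩
  -- Part 2
  rintro ⟨v, hv, hinv⟩
  -- every element of the span is simple
  have hsimple : ∀ ξ ∈ Submodule.span ℝ {ξ : E | ∃ u : V, ⟪v, u⟫ = 0 ∧ ξ = w v u},
      ∃ u : V, ⟪v, u⟫ = 0 ∧ ξ = w v u := by
    intro ξ hξ
    induction hξ using Submodule.span_induction with
    | mem x hx => exact hx
    | zero => exact ⟨0, by simp, by simp⟩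
    | add x y hx hy ihx ihy =>
      obtain ⟨u₁, hu₁, rfl⟩ := ihx
      obtain ⟨u₂, hu₂, rfl⟩ := ihy
      exact ⟨u₁ + u₂, by rw [inner_add_right, hu₁, hu₂, add_zero], by rw [map_add]⟩
    | smul t x hx ih =>
      obtain ⟨u, hu, rfl⟩ := ih
      exact ⟨t • u, by rw [real_inner_smul_right, hu, mul_zero], by rw [map_smul]⟩
  -- find a nonzero vector orthogonal to v
  have hvne : v ≠ 0 := by
    intro h
    rw [h, norm_zero] at hv
    norm_num at hv
  have h4dim : Module.finrank ℝ V = 4 := by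
    rw [Module.finrank_eq_card_basis e.toBasis, Fintype.card_fin]
  have hKdim : Module.finrank ℝ (ℝ ∙ v) = 1 := finrank_span_singleton hvne
  have hORth : (ℝ ∙ v)ᗮ ≠ ⊥ := by
    intro h
    have := Submodule.finrank_add_finrank_orthogonal (K := (ℝ ∙ v))
    rw [h, hKdim, h4dim, finrank_bot] at this
    norm_num at this
  obtain ⟨u₀, hu₀mem, hu₀ne⟩ := Submodule.exists_mem_ne_zero_of_ne_bot hORth
  have hvu₀ : ⟪v, u₀⟫ = 0 :=
    (Submodule.mem_orthogonal _ _).mp hu₀mem v (Submodule.mem_span_singleton_self v)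
  have hwvu : w v u₀ ≠ 0 := by
    intro h
    have h1 := hinner v u₀ v u₀
    rw [h, inner_zero_left, hvu₀, real_inner_self_eq_norm_sq v, hv] at h1
    have : ⟪u₀, u₀⟫ = 0 := by nlinarith [h1]
    exact hu₀ne (inner_self_eq_zero.mp this)
  set F : Submodule ℝ E := Submodule.span ℝ {ξ : E | ∃ u : V, ⟪v, u⟫ = 0 ∧ ξ = w v u} with hF
  have hmemF : w v u₀ ∈ F := Submodule.subset_span ⟨u₀, hvu₀, rfl⟩
  haveI : Nontrivial F := ⟨⟨w v u₀, hmemF⟩, 0, by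
    intro h
    exact hwvu (congrArg Subtype.val h)⟩
  let T : F →ₗ[ℝ] F := W.restrict hinv
  have hTsym : T.IsSymmetric := by
    intro x y
    have := hW (x : E) (y : E)
    simpa [T, LinearMap.restrict_apply, Submodule.coe_inner] using this
  have hev := hTsym.hasEigenvalue_iSup_of_finiteDimensional
  obtain ⟨ξ₀, hξ₀mem, hξ₀ne⟩ := hev.exists_hasEigenvector
  set ν : ℝ := _
  have h1 : T ξ₀ = ν • ξ₀ := Module.End.mem_eigenspace_iff.mp hξ₀mem
  have h2 : W (ξ₀ : E) = ν • (ξ₀ : E) := by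
    have := congrArg (Subtype.val) h1
    rwa [LinearMap.restrict_coe_apply] at this
  have h3 : (ξ₀ : E) ≠ 0 := fun h => hξ₀ne (Subtype.ext h)
  obtain ⟨u, hu, hwu⟩ := hsimple (ξ₀ : E) ξ₀.2
  exact part1 (ξ₀ : E) ν h3 h2 ⟨v, u, hwu⟩
end

section
/- Let V be a 4-dimensional oriented real inner product space, and let W be a self-adjoint endomorphism of Λ²V preserving Λ⁺ and Λ⁻ and satisfying the eigenflag condition: there is a unit vector v with W(v ∧ v⊥) ⊆ v ∧ v⊥. Then in a suitable oriented orthonormal basis e₁ = v, e₂, e₃, e₄, W is diagonal with W(e₁∧eⱼ) = λ₁ⱼ e₁∧eⱼ, W(e₃∧e₄) = λ₁₂ e₃∧e₄, W(e₂∧e₄) = λ₁₃ e₂∧e₄, W(e₂∧e₃) = λ₁₄ e₂∧e₃; i.e., W⁺ and W⁻ have the same eigenvalues (λ₁₂, λ₁₃, λ₁₄). -/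
open scoped RealInnerProductSpace
set_option maxHeartbeats 1000000

section Helpers

variable {V E : Type*} [NormedAddCommGroup V] [InnerProductSpace ℝ V]
  [NormedAddCommGroup E] [InnerProductSpace ℝ E]

private lemma inner_ext_of_span' (w : V →ₗ[ℝ] V →ₗ[ℝ] E)
    (hspan : Submodule.span ℝ {ξ : E | ∃ x y : V, ξ = w x y} = ⊤) {ξ η : E}
    (h : ∀ c d : V, ⟪ξ, w c d⟫ = ⟪η, w c d⟫) : ξ = η := by
  have key : ∀ ζ ∈ Submodule.span ℝ {ξ : E | ∃ x y : V, ξ = w x y}, ⟪ξ - η, ζ⟫ = 0 := by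
    intro ζ hζ
    induction hζ using Submodule.span_induction with
    | mem x hx =>
      obtain ⟨a, b, rfl⟩ := hx
      rw [inner_sub_left, h a b, sub_self]
    | zero => simp
    | add x y _ _ hx hy => rw [inner_add_right, hx, hy, add_zero]
    | smul a x _ hx => rw [real_inner_smul_right, hx, mul_zero]
  have h2 := key (ξ - η) (by rw [hspan]; trivial)
  rwa [inner_self_eq_zero, sub_eq_zero] at h2

private lemma quadDet_congr' (e f : OrthonormalBasis (Fin 4) ℝ V)
    (h : (Matrix.of fun i j => ⟪e i, f j⟫).det = 1) (a b c d : V) :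
    quadDet e a b c d = quadDet f a b c d := by
  have hmat : (Matrix.of
      ![fun j => ⟪e j, a⟫, fun j => ⟪e j, b⟫, fun j => ⟪e j, c⟫, fun j => ⟪e j, d⟫]) =
      (Matrix.of
      ![fun j => ⟪f j, a⟫, fun j => ⟪f j, b⟫, fun j => ⟪f j, c⟫, fun j => ⟪f j, d⟫]) *
      (Matrix.of fun i j => ⟪e i, f j⟫).transpose := by
    ext r j
    fin_cases r <;>
      simpa [Matrix.mul_apply, mul_comm] using (f.sum_inner_mul_inner (e j) _).symm
  unfold quadDet
  rw [hmat, Matrix.det_mul, Matrix.det_transpose, h, mul_one]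

private lemma onb_det_sq' (e f : OrthonormalBasis (Fin 4) ℝ V) :
    (Matrix.of fun i j => ⟪e i, f j⟫).det * (Matrix.of fun i j => ⟪e i, f j⟫).det = 1 := by
  have hf := orthonormal_iff_ite.mp f.orthonormal
  have hmm : (Matrix.of fun i j => ⟪e i, f j⟫).transpose * (Matrix.of fun i j => ⟪e i, f j⟫) = 1 := by
    ext j k
    simp only [Matrix.mul_apply, Matrix.transpose_apply, Matrix.of_apply, Matrix.one_apply]
    rw [show (∑ i, ⟪e i, f j⟫ * ⟪e i, f k⟫) = ∑ i, ⟪f j, e i⟫ * ⟪e i, f k⟫ from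
      Finset.sum_congr rfl fun i _ => by rw [real_inner_comm (e i) (f j)]]
    rw [e.sum_inner_mul_inner, hf]
  have h2 := congrArg Matrix.det hmm
  rwa [Matrix.det_mul, Matrix.det_transpose, Matrix.det_one] at h2

private lemma hodge_comm' (hodge W : E →ₗ[ℝ] E)
    (hWp : ∀ ξ ∈ Module.End.eigenspace hodge (1 : ℝ),
      W ξ ∈ Module.End.eigenspace hodge (1 : ℝ))
    (hWm : ∀ ξ ∈ Module.End.eigenspace hodge (-1 : ℝ),
      W ξ ∈ Module.End.eigenspace hodge (-1 : ℝ))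
    {ξ η : E} {l : ℝ} (h1 : hodge ξ = η) (h2 : hodge η = ξ) (hl : W ξ = l • ξ) :
    W η = l • η := by
  have hp : ξ + η ∈ Module.End.eigenspace hodge (1 : ℝ) := by
    rw [Module.End.mem_eigenspace_iff, map_add, h1, h2, one_smul, add_comm]
  have hm : ξ - η ∈ Module.End.eigenspace hodge (-1 : ℝ) := by
    rw [Module.End.mem_eigenspace_iff, map_sub, h1, h2]
    module
  have hp' := Module.End.mem_eigenspace_iff.mp (hWp _ hp)
  have hm' := Module.End.mem_eigenspace_iff.mp (hWm _ hm)
  rw [one_smul] at hp'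
  have key : hodge (W (ξ + η) + W (ξ - η)) = W (ξ + η) - W (ξ - η) := by
    rw [map_add, hp', hm']
    module
  have lhs : W (ξ + η) + W (ξ - η) = (2 : ℝ) • W ξ := by
    rw [map_add, map_sub]; module
  have rhs : W (ξ + η) - W (ξ - η) = (2 : ℝ) • W η := by
    rw [map_add, map_sub]; module
  rw [lhs, rhs, hl] at key
  simp only [map_smul, h1] at key
  have := smul_right_injective E (two_ne_zero (α := ℝ)) key
  rw [← this]

end Helpers

/-- Let `V` be a 4-dimensional oriented real inner product space (orientation given by
the orthonormal basis `e`; `Λ²V` modelled by `E` via `w`, with Hodge star `hodge`), and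
let `W` be a self-adjoint endomorphism of `Λ²V` preserving `Λ⁺` and `Λ⁻` and satisfying
the eigenflag condition with unit vector `v`.  Then there is an oriented orthonormal
basis `f` with `f₁ = v` in which `W` is diagonal, with `W(f₁∧fⱼ) = λ₁ⱼ f₁∧fⱼ`,
`W(f₃∧f₄) = λ₁₂ f₃∧f₄`, `W(f₂∧f₄) = λ₁₃ f₂∧f₄`, `W(f₂∧f₃) = λ₁₄ f₂∧f₃`; i.e. `W⁺` and
`W⁻` have the same eigenvalues `(λ₁₂, λ₁₃, λ₁₄)`. -/
theorem eigenflag_dim4_diagonal_form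
    {V E : Type*} [NormedAddCommGroup V] [InnerProductSpace ℝ V]
    [NormedAddCommGroup E] [InnerProductSpace ℝ E]
    [FiniteDimensional ℝ V] [FiniteDimensional ℝ E]
    (e : OrthonormalBasis (Fin 4) ℝ V)
    (w : V →ₗ[ℝ] V →ₗ[ℝ] E)
    (halt : ∀ x : V, w x x = 0)
    (hinner : ∀ a b c d : V, ⟪w a b, w c d⟫ = ⟪a, c⟫ * ⟪b, d⟫ - ⟪a, d⟫ * ⟪b, c⟫)
    (hspan : Submodule.span ℝ {ξ : E | ∃ x y : V, ξ = w x y} = ⊤)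
    (hodge : E →ₗ[ℝ] E)
    (hhodge : ∀ a b c d : V, ⟪hodge (w a b), w c d⟫ = quadDet e a b c d)
    (W : E →ₗ[ℝ] E) (hW : W.IsSymmetric)
    (hWp : ∀ ξ ∈ Module.End.eigenspace hodge (1 : ℝ),
      W ξ ∈ Module.End.eigenspace hodge (1 : ℝ))
    (hWm : ∀ ξ ∈ Module.End.eigenspace hodge (-1 : ℝ),
      W ξ ∈ Module.End.eigenspace hodge (-1 : ℝ))
    (v : V) (hv : ‖v‖ = 1)
    (hinv : ∀ ξ ∈ Submodule.span ℝ {ξ : E | ∃ u : V, ⟪v, u⟫ = 0 ∧ ξ = w v u},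
      W ξ ∈ Submodule.span ℝ {ξ : E | ∃ u : V, ⟪v, u⟫ = 0 ∧ ξ = w v u}) :
    ∃ f : OrthonormalBasis (Fin 4) ℝ V, f 0 = v ∧
      Matrix.det (Matrix.of fun i j => ⟪e i, f j⟫) = 1 ∧
      ∃ l12 l13 l14 : ℝ,
        W (w (f 0) (f 1)) = l12 • w (f 0) (f 1) ∧
        W (w (f 0) (f 2)) = l13 • w (f 0) (f 2) ∧
        W (w (f 0) (f 3)) = l14 • w (f 0) (f 3) ∧
        W (w (f 2) (f 3)) = l12 • w (f 2) (f 3) ∧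
        W (w (f 1) (f 3)) = l13 • w (f 1) (f 3) ∧
        W (w (f 1) (f 2)) = l14 • w (f 1) (f 2) := by
  classical
  have hv0 : v ≠ 0 := by
    intro h; rw [h, norm_zero] at hv; exact one_ne_zero hv.symm
  have hVfin : Module.finrank ℝ V = 4 := by
    rw [Module.finrank_eq_card_basis e.toBasis, Fintype.card_fin]
  have hvv : ⟪v, v⟫ = 1 := by
    rw [real_inner_self_eq_norm_mul_norm, hv, one_mul]
  set K : Submodule ℝ V := (Submodule.span ℝ {v})ᗮ with hK
  have hKfin : Module.finrank ℝ K = 3 := by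
    have h1 : Module.finrank ℝ (Submodule.span ℝ ({v} : Set V)) = 1 :=
      finrank_span_singleton hv0
    have h2 := Submodule.finrank_add_finrank_orthogonal (Submodule.span ℝ ({v} : Set V))
    rw [h1, hVfin] at h2
    rw [hK]
    omega
  set ι : K →ₗ[ℝ] E := (w v).comp K.subtype with hι
  have hmemK : ∀ u : K, ⟪v, (u : V)⟫ = 0 := fun u =>
    Submodule.mem_orthogonal_singleton_iff_inner_right.mp u.2
  have hιapp : ∀ u : K, ι u = w v (u : V) := fun u => rfl
  have hιinner : ∀ a b : K, ⟪ι a, ι b⟫ = ⟪a, b⟫ := by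
    intro a b
    rw [Submodule.coe_inner, hιapp, hιapp, hinner, hvv, hmemK b]
    ring
  set S : Set E := {ξ : E | ∃ u : V, ⟪v, u⟫ = 0 ∧ ξ = w v u} with hS
  have hrange : Submodule.span ℝ S = LinearMap.range ι := by
    have hSet : S = ↑(LinearMap.range ι) := by
      ext ξ
      constructor
      · rintro ⟨u, hu, rfl⟩
        exact ⟨⟨u, Submodule.mem_orthogonal_singleton_iff_inner_right.mpr hu⟩, rfl⟩
      · rintro ⟨u, rfl⟩
        exact ⟨u, hmemK u, rfl⟩
    rw [hSet, Submodule.span_eq]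
  set A := LinearMap.adjoint ι with hA
  have hAι : ∀ k : K, A (ι k) = k := by
    intro k
    apply ext_inner_right ℝ
    intro b
    rw [hA, LinearMap.adjoint_inner_left, hιinner]
  set T : K →ₗ[ℝ] K := A ∘ₗ W ∘ₗ ι with hT
  have hιT : ∀ k : K, ι (T k) = W (ι k) := by
    intro k
    have hmem : W (ι k) ∈ LinearMap.range ι := by
      rw [← hrange]
      exact hinv _ (hrange ▸ LinearMap.mem_range_self ι k)
    obtain ⟨m, hm⟩ := hmem
    have hTk : T k = m := by
      simp only [hT, LinearMap.comp_apply]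
      rw [← hm, hAι]
    rw [hTk, hm]
  have hTsym : T.IsSymmetric := by
    intro a b
    rw [← hιinner (T a) b, ← hιinner a (T b), hιT, hιT]
    exact hW (ι a) (ι b)
  set b3 := hTsym.eigenvectorBasis hKfin with hb3
  set μ := hTsym.eigenvalues hKfin with hμ
  have heig : ∀ i, W (w v ((b3 i : K) : V)) = μ i • w v ((b3 i : K) : V) := by
    intro i
    rw [← hιapp, ← hιT, hTsym.apply_eigenvectorBasis]
    simp [hμ, hb3]
  -- build an orthonormal basis for any sign s
  have hb3o : ∀ i j : Fin 3, ⟪((b3 i : K) : V), ((b3 j : K) : V)⟫ = if i = j then 1 else 0 := by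
    intro i j
    rw [← Submodule.coe_inner]
    exact (orthonormal_iff_ite.mp b3.orthonormal) i j
  have hbuild : ∀ s : ℝ, s * s = 1 → ∃ f : OrthonormalBasis (Fin 4) ℝ V,
      f 0 = v ∧ f 1 = ((b3 0 : K) : V) ∧ f 2 = ((b3 1 : K) : V) ∧
      f 3 = s • ((b3 2 : K) : V) := by
    intro s hs
    set g : Fin 4 → V := ![v, ((b3 0 : K) : V), ((b3 1 : K) : V), s • ((b3 2 : K) : V)] with hg
    have horth : Orthonormal ℝ g := by
      rw [orthonormal_iff_ite]
      intro i j
      fin_cases i <;> fin_cases j <;>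
        simp [g, hvv, hmemK, real_inner_smul_left, real_inner_smul_right, hb3o,
          real_inner_comm v, mul_assoc, hs, -inner_self_eq_norm_sq_to_K]
    have hcard : Fintype.card (Fin 4) = Module.finrank ℝ V := by
      rw [Fintype.card_fin, hVfin]
    set bas := basisOfLinearIndependentOfCardEqFinrank horth.linearIndependent hcard with hbdef
    have hbas : ⇑bas = g := coe_basisOfLinearIndependentOfCardEqFinrank _ _
    refine ⟨bas.toOrthonormalBasis (by rwa [hbas]), ?_, ?_, ?_, ?_⟩ <;>
      simp [Module.Basis.coe_toOrthonormalBasis, hbas, g]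
  obtain ⟨f1, hf10, hf11, hf12, hf13⟩ := hbuild 1 (by norm_num)
  set d := (Matrix.of fun i j => ⟪e i, f1 j⟫).det with hd
  have hd2 : d * d = 1 := onb_det_sq' e f1
  obtain ⟨f, hf0, hf1, hf2, hf3⟩ := hbuild d hd2
  have hdet : (Matrix.of fun i j => ⟪e i, f j⟫).det = 1 := by
    have hM : (Matrix.of fun i j => ⟪e i, f j⟫) =
        (Matrix.of fun i j => ⟪e i, f1 j⟫) * Matrix.diagonal ![1, 1, 1, d] := by
      ext i j
      rw [Matrix.mul_diagonal]
      fin_cases j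
      · show ⟪e i, f 0⟫ = ⟪e i, f1 0⟫ * ![(1:ℝ), 1, 1, d] 0
        rw [hf0, hf10]; simp
      · show ⟪e i, f 1⟫ = ⟪e i, f1 1⟫ * ![(1:ℝ), 1, 1, d] 1
        rw [hf1, hf11]; simp
      · show ⟪e i, f 2⟫ = ⟪e i, f1 2⟫ * ![(1:ℝ), 1, 1, d] 2
        rw [hf2, hf12]; simp
      · show ⟪e i, f 3⟫ = ⟪e i, f1 3⟫ * ![(1:ℝ), 1, 1, d] 3
        rw [hf3, hf13]
        simp [real_inner_smul_right, mul_comm]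
    rw [hM, Matrix.det_mul, ← hd, Matrix.det_diagonal, Fin.prod_univ_four]
    simpa using hd2
  -- diagonal action on v ∧ v⊥
  have hw1 : W (w (f 0) (f 1)) = μ 0 • w (f 0) (f 1) := by
    rw [hf0, hf1]; exact heig 0
  have hw2 : W (w (f 0) (f 2)) = μ 1 • w (f 0) (f 2) := by
    rw [hf0, hf2]; exact heig 1
  have hw3 : W (w (f 0) (f 3)) = μ 2 • w (f 0) (f 3) := by
    rw [hf0, hf3]
    simp only [map_smul, LinearMap.smul_apply]
    rw [heig 2, smul_comm]
  -- hodge duality relations in the oriented basis f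
  have hff := orthonormal_iff_ite.mp f.orthonormal
  have hpair : ∀ a b c dd : V, ⟪hodge (w a b), w c dd⟫ = quadDet f a b c dd := by
    intro a b c dd
    rw [hhodge, quadDet_congr' e f hdet]
  have hodge_eq : ∀ i j k l : Fin 4,
      (∀ c dd : V, quadDet f (f i) (f j) c dd =
        ⟪f k, c⟫ * ⟪f l, dd⟫ - ⟪f k, dd⟫ * ⟪f l, c⟫) →
      hodge (w (f i) (f j)) = w (f k) (f l) := by
    intro i j k l h
    apply inner_ext_of_span' w hspan
    intro c dd
    rw [hpair, hinner, h]
  have h01 : hodge (w (f 0) (f 1)) = w (f 2) (f 3) := by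
    apply hodge_eq
    intro c dd
    simp (config := { decide := true }) [quadDet, Matrix.det_succ_row_zero,
      Fin.sum_univ_succ, Fin.succAbove, Fin.lt_def, -Fin.val_fin_lt, -Fin.val_pos_iff, hff,
      show (Fin.succ 2 : Fin 4) = 3 from rfl, show (Fin.succ 0 : Fin 3) = 1 from rfl,
      show (Fin.castSucc 2 : Fin 4) = 2 from rfl, show (Fin.castSucc 0 : Fin 4) = 0 from rfl,
      show (Fin.castSucc 1 : Fin 4) = 1 from rfl]
    ring
  have h23 : hodge (w (f 2) (f 3)) = w (f 0) (f 1) := by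
    apply hodge_eq
    intro c dd
    simp (config := { decide := true }) [quadDet, Matrix.det_succ_row_zero,
      Fin.sum_univ_succ, Fin.succAbove, Fin.lt_def, -Fin.val_fin_lt, -Fin.val_pos_iff, hff,
      show (Fin.succ 2 : Fin 4) = 3 from rfl, show (Fin.succ 0 : Fin 3) = 1 from rfl,
      show (Fin.castSucc 2 : Fin 4) = 2 from rfl, show (Fin.castSucc 0 : Fin 4) = 0 from rfl,
      show (Fin.castSucc 1 : Fin 4) = 1 from rfl]
    ring
  have h02 : hodge (w (f 0) (f 2)) = w (f 3) (f 1) := by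
    apply hodge_eq
    intro c dd
    simp (config := { decide := true }) [quadDet, Matrix.det_succ_row_zero,
      Fin.sum_univ_succ, Fin.succAbove, Fin.lt_def, -Fin.val_fin_lt, -Fin.val_pos_iff, hff,
      show (Fin.succ 2 : Fin 4) = 3 from rfl, show (Fin.succ 0 : Fin 3) = 1 from rfl,
      show (Fin.castSucc 2 : Fin 4) = 2 from rfl, show (Fin.castSucc 0 : Fin 4) = 0 from rfl,
      show (Fin.castSucc 1 : Fin 4) = 1 from rfl]
    ring
  have h31 : hodge (w (f 3) (f 1)) = w (f 0) (f 2) := by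
    apply hodge_eq
    intro c dd
    simp (config := { decide := true }) [quadDet, Matrix.det_succ_row_zero,
      Fin.sum_univ_succ, Fin.succAbove, Fin.lt_def, -Fin.val_fin_lt, -Fin.val_pos_iff, hff,
      show (Fin.succ 2 : Fin 4) = 3 from rfl, show (Fin.succ 0 : Fin 3) = 1 from rfl,
      show (Fin.castSucc 2 : Fin 4) = 2 from rfl, show (Fin.castSucc 0 : Fin 4) = 0 from rfl,
      show (Fin.castSucc 1 : Fin 4) = 1 from rfl]
    ring
  have h03 : hodge (w (f 0) (f 3)) = w (f 1) (f 2) := by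
    apply hodge_eq
    intro c dd
    simp (config := { decide := true }) [quadDet, Matrix.det_succ_row_zero,
      Fin.sum_univ_succ, Fin.succAbove, Fin.lt_def, -Fin.val_fin_lt, -Fin.val_pos_iff, hff,
      show (Fin.succ 2 : Fin 4) = 3 from rfl, show (Fin.succ 0 : Fin 3) = 1 from rfl,
      show (Fin.castSucc 2 : Fin 4) = 2 from rfl, show (Fin.castSucc 0 : Fin 4) = 0 from rfl,
      show (Fin.castSucc 1 : Fin 4) = 1 from rfl]
    ring
  have h12 : hodge (w (f 1) (f 2)) = w (f 0) (f 3) := by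
    apply hodge_eq
    intro c dd
    simp (config := { decide := true }) [quadDet, Matrix.det_succ_row_zero,
      Fin.sum_univ_succ, Fin.succAbove, Fin.lt_def, -Fin.val_fin_lt, -Fin.val_pos_iff, hff,
      show (Fin.succ 2 : Fin 4) = 3 from rfl, show (Fin.succ 0 : Fin 3) = 1 from rfl,
      show (Fin.castSucc 2 : Fin 4) = 2 from rfl, show (Fin.castSucc 0 : Fin 4) = 0 from rfl,
      show (Fin.castSucc 1 : Fin 4) = 1 from rfl]
    ring
  -- transfer eigenvalues through hodge
  have k23 : W (w (f 2) (f 3)) = μ 0 • w (f 2) (f 3) :=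
    hodge_comm' hodge W hWp hWm h01 h23 hw1
  have k31 : W (w (f 3) (f 1)) = μ 1 • w (f 3) (f 1) :=
    hodge_comm' hodge W hWp hWm h02 h31 hw2
  have k12 : W (w (f 1) (f 2)) = μ 2 • w (f 1) (f 2) :=
    hodge_comm' hodge W hWp hWm h03 h12 hw3
  have hanti : ∀ x y : V, w x y = - w y x := by
    intro x y
    have h := halt (x + y)
    simp only [map_add, LinearMap.add_apply, halt x, halt y, zero_add, add_zero] at h
    exact eq_neg_of_add_eq_zero_right h
  have k13 : W (w (f 1) (f 3)) = μ 1 • w (f 1) (f 3) := by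
    have h := k31
    rw [hanti (f 3) (f 1)] at h
    simp only [map_neg, smul_neg, neg_inj] at h
    exact h
  exact ⟨f, hf0, hdet, μ 0, μ 1, μ 2, hw1, hw2, hw3, k23, k13, k12⟩
end

section
/- The Weyl curvature operator of the Fubini–Study metric of ℂP² at any point, written in the basis (φ₁,φ₂,φ₃,ψ₁,ψ₂,ψ₃) of Λ² adapted to the complex structure, is diag(4, −2, −2, 0, 0, 0); in particular every eigenvector of the Weyl operator lies in Λ⁺ or Λ⁻, hence is non-simple, so the Weyl operator does not satisfy the eigenflag condition at any point. -/
set_option maxHeartbeats 1000000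

open scoped RealInnerProductSpace

/-- The curvature operator `R` of the Fubini–Study metric of `ℂP²` at a point (acting on
`Λ²` modelled by `E` via the alternating map `w`, in the basis `φ₁, φ₂, φ₃, ψ₁, ψ₂, ψ₃`
adapted to the complex structure) satisfies `R φ₁ = 6φ₁`, `R φ₂ = R φ₃ = 0`,
`R ψᵢ = 2ψᵢ`.  Its Weyl part `W = R − (s/12)·Id = R − 2·Id` is `diag(4, −2, −2, 0, 0, 0)`
in this basis; every eigenvector of `W` lies in `Λ⁺` or `Λ⁻`, hence is non-simple, and
`W` does not satisfy the eigenflag condition. -/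
theorem fubini_study_weyl_no_eigenflag
    {V E : Type*} [NormedAddCommGroup V] [InnerProductSpace ℝ V]
    [NormedAddCommGroup E] [InnerProductSpace ℝ E]
    [FiniteDimensional ℝ V] [FiniteDimensional ℝ E]
    (e : OrthonormalBasis (Fin 4) ℝ V)
    (w : V →ₗ[ℝ] V →ₗ[ℝ] E)
    (halt : ∀ x : V, w x x = 0)
    (hinner : ∀ a b c d : V, ⟪w a b, w c d⟫ = ⟪a, c⟫ * ⟪b, d⟫ - ⟪a, d⟫ * ⟪b, c⟫)
    (hspan : Submodule.span ℝ {ξ : E | ∃ x y : V, ξ = w x y} = ⊤)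
    (R : E →ₗ[ℝ] E) (hRsym : R.IsSymmetric)
    (hφ₁ : R (w (e 0) (e 1) + w (e 2) (e 3)) = (6 : ℝ) • (w (e 0) (e 1) + w (e 2) (e 3)))
    (hφ₂ : R (w (e 0) (e 2) - w (e 1) (e 3)) = 0)
    (hφ₃ : R (w (e 0) (e 3) + w (e 1) (e 2)) = 0)
    (hψ₁ : R (w (e 0) (e 1) - w (e 2) (e 3)) = (2 : ℝ) • (w (e 0) (e 1) - w (e 2) (e 3)))
    (hψ₂ : R (w (e 0) (e 2) + w (e 1) (e 3)) = (2 : ℝ) • (w (e 0) (e 2) + w (e 1) (e 3)))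
    (hψ₃ : R (w (e 0) (e 3) - w (e 1) (e 2)) = (2 : ℝ) • (w (e 0) (e 3) - w (e 1) (e 2)))
    (W : E →ₗ[ℝ] E) (hWdef : W = R - (2 : ℝ) • LinearMap.id) :
    W (w (e 0) (e 1) + w (e 2) (e 3)) = (4 : ℝ) • (w (e 0) (e 1) + w (e 2) (e 3)) ∧
    W (w (e 0) (e 2) - w (e 1) (e 3)) = (-2 : ℝ) • (w (e 0) (e 2) - w (e 1) (e 3)) ∧
    W (w (e 0) (e 3) + w (e 1) (e 2)) = (-2 : ℝ) • (w (e 0) (e 3) + w (e 1) (e 2)) ∧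
    W (w (e 0) (e 1) - w (e 2) (e 3)) = 0 ∧
    W (w (e 0) (e 2) + w (e 1) (e 3)) = 0 ∧
    W (w (e 0) (e 3) - w (e 1) (e 2)) = 0 ∧
    (∀ (ξ : E) (μ : ℝ), W ξ = μ • ξ →
      ξ ∈ Submodule.span ℝ ({w (e 0) (e 1) + w (e 2) (e 3),
        w (e 0) (e 2) - w (e 1) (e 3), w (e 0) (e 3) + w (e 1) (e 2)} : Set E) ∨
      ξ ∈ Submodule.span ℝ ({w (e 0) (e 1) - w (e 2) (e 3),
        w (e 0) (e 2) + w (e 1) (e 3), w (e 0) (e 3) - w (e 1) (e 2)} : Set E)) ∧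
    (∀ (ξ : E) (μ : ℝ), ξ ≠ 0 → W ξ = μ • ξ → ¬ ∃ x y : V, ξ = w x y) ∧
    ¬ ∃ v : V, ‖v‖ = 1 ∧
      ∀ ξ ∈ Submodule.span ℝ {ξ : E | ∃ u : V, ⟪v, u⟫ = 0 ∧ ξ = w v u},
        W ξ ∈ Submodule.span ℝ {ξ : E | ∃ u : V, ⟪v, u⟫ = 0 ∧ ξ = w v u} := by
  have he : ∀ i j : Fin 4, ⟪e i, e j⟫ = if i = j then (1:ℝ) else 0 :=
    orthonormal_iff_ite.mp e.orthonormal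
  have hw : ∀ a b c d : Fin 4, ⟪w (e a) (e b), w (e c) (e d)⟫ =
      (if a = c then (1:ℝ) else 0) * (if b = d then (1:ℝ) else 0) -
      (if a = d then (1:ℝ) else 0) * (if b = c then (1:ℝ) else 0) := by
    intro a b c d; rw [hinner, he, he, he, he]
  have hskew : ∀ x y : V, w y x = - w x y := by
    intro x y
    have h := halt (x + y)
    simp only [map_add, LinearMap.add_apply, halt, zero_add, add_zero] at h
    exact eq_neg_of_add_eq_zero_left h
  set A := w (e 0) (e 1) + w (e 2) (e 3) with hAd
  set B := w (e 0) (e 2) - w (e 1) (e 3) with hBd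
  set C := w (e 0) (e 3) + w (e 1) (e 2) with hCd
  set P := w (e 0) (e 1) - w (e 2) (e 3) with hPd
  set Q := w (e 0) (e 2) + w (e 1) (e 3) with hQd
  set S := w (e 0) (e 3) - w (e 1) (e 2) with hSd
  -- Weyl operator values
  have W1 : W A = (4:ℝ) • A := by
    rw [hWdef]
    simp only [LinearMap.sub_apply, LinearMap.smul_apply, LinearMap.id_apply, hφ₁]
    module
  have W2 : W B = (-2:ℝ) • B := by
    rw [hWdef]
    simp only [LinearMap.sub_apply, LinearMap.smul_apply, LinearMap.id_apply, hφ₂]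
    module
  have W3 : W C = (-2:ℝ) • C := by
    rw [hWdef]
    simp only [LinearMap.sub_apply, LinearMap.smul_apply, LinearMap.id_apply, hφ₃]
    module
  have W4 : W P = 0 := by
    rw [hWdef]
    simp only [LinearMap.sub_apply, LinearMap.smul_apply, LinearMap.id_apply, hψ₁]
    module
  have W5 : W Q = 0 := by
    rw [hWdef]
    simp only [LinearMap.sub_apply, LinearMap.smul_apply, LinearMap.id_apply, hψ₂]
    module
  have W6 : W S = 0 := by
    rw [hWdef]
    simp only [LinearMap.sub_apply, LinearMap.smul_apply, LinearMap.id_apply, hψ₃]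
    module
  have hWsym : W.IsSymmetric := by
    rw [hWdef]; intro x y
    simp only [LinearMap.sub_apply, LinearMap.smul_apply, LinearMap.id_apply,
      inner_sub_left, inner_sub_right, real_inner_smul_left, real_inner_smul_right]
    rw [hRsym x y]
  -- the six vectors span E
  have h01 : w (e 0) (e 1) ∈ Submodule.span ℝ ({A, B, C, P, Q, S} : Set E) := by
    have h : w (e 0) (e 1) = (2⁻¹:ℝ) • A + (2⁻¹:ℝ) • P := by rw [hAd, hPd]; module
    rw [h]
    exact Submodule.add_mem _ (Submodule.smul_mem _ _ (Submodule.subset_span (by simp)))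
      (Submodule.smul_mem _ _ (Submodule.subset_span (by simp)))
  have h23 : w (e 2) (e 3) ∈ Submodule.span ℝ ({A, B, C, P, Q, S} : Set E) := by
    have h : w (e 2) (e 3) = (2⁻¹:ℝ) • A - (2⁻¹:ℝ) • P := by rw [hAd, hPd]; module
    rw [h]
    exact Submodule.sub_mem _ (Submodule.smul_mem _ _ (Submodule.subset_span (by simp)))
      (Submodule.smul_mem _ _ (Submodule.subset_span (by simp)))
  have h02 : w (e 0) (e 2) ∈ Submodule.span ℝ ({A, B, C, P, Q, S} : Set E) := by
    have h : w (e 0) (e 2) = (2⁻¹:ℝ) • B + (2⁻¹:ℝ) • Q := by rw [hBd, hQd]; module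
    rw [h]
    exact Submodule.add_mem _ (Submodule.smul_mem _ _ (Submodule.subset_span (by simp)))
      (Submodule.smul_mem _ _ (Submodule.subset_span (by simp)))
  have h13 : w (e 1) (e 3) ∈ Submodule.span ℝ ({A, B, C, P, Q, S} : Set E) := by
    have h : w (e 1) (e 3) = (2⁻¹:ℝ) • Q - (2⁻¹:ℝ) • B := by rw [hBd, hQd]; module
    rw [h]
    exact Submodule.sub_mem _ (Submodule.smul_mem _ _ (Submodule.subset_span (by simp)))
      (Submodule.smul_mem _ _ (Submodule.subset_span (by simp)))
  have h03 : w (e 0) (e 3) ∈ Submodule.span ℝ ({A, B, C, P, Q, S} : Set E) := by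
    have h : w (e 0) (e 3) = (2⁻¹:ℝ) • C + (2⁻¹:ℝ) • S := by rw [hCd, hSd]; module
    rw [h]
    exact Submodule.add_mem _ (Submodule.smul_mem _ _ (Submodule.subset_span (by simp)))
      (Submodule.smul_mem _ _ (Submodule.subset_span (by simp)))
  have h12 : w (e 1) (e 2) ∈ Submodule.span ℝ ({A, B, C, P, Q, S} : Set E) := by
    have h : w (e 1) (e 2) = (2⁻¹:ℝ) • C - (2⁻¹:ℝ) • S := by rw [hCd, hSd]; module
    rw [h]
    exact Submodule.sub_mem _ (Submodule.smul_mem _ _ (Submodule.subset_span (by simp)))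
      (Submodule.smul_mem _ _ (Submodule.subset_span (by simp)))
  have hS6 : Submodule.span ℝ ({A, B, C, P, Q, S} : Set E) = ⊤ := by
    rw [eq_top_iff, ← hspan, Submodule.span_le]
    rintro ξ ⟨x, y, rfl⟩
    rw [← e.sum_repr' x, ← e.sum_repr' y]
    simp only [map_sum, map_smul, LinearMap.coe_sum, Finset.sum_apply, LinearMap.smul_apply]
    refine Submodule.sum_mem _ fun i _ => Submodule.smul_mem _ _
      (Submodule.sum_mem _ fun j _ => Submodule.smul_mem _ _ ?_)
    fin_cases i <;> fin_cases j <;>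
      first
        | (rw [halt]; exact Submodule.zero_mem _)
        | exact h01 | exact h02 | exact h03 | exact h12 | exact h13 | exact h23
        | (rw [hskew]; exact Submodule.neg_mem _ h01)
        | (rw [hskew]; exact Submodule.neg_mem _ h02)
        | (rw [hskew]; exact Submodule.neg_mem _ h03)
        | (rw [hskew]; exact Submodule.neg_mem _ h12)
        | (rw [hskew]; exact Submodule.neg_mem _ h13)
        | (rw [hskew]; exact Submodule.neg_mem _ h23)
  -- decomposition of an arbitrary element in the orthogonal basis A,B,C,P,Q,S
  have hbasis : ∀ ξ : E, ξ = (⟪A, ξ⟫/2) • A + (⟪B, ξ⟫/2) • B + (⟪C, ξ⟫/2) • C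
      + (⟪P, ξ⟫/2) • P + (⟪Q, ξ⟫/2) • Q + (⟪S, ξ⟫/2) • S := by
    intro ξ
    have horto : ∀ g ∈ ({A, B, C, P, Q, S} : Set E),
        ⟪g, ξ - ((⟪A, ξ⟫/2) • A + (⟪B, ξ⟫/2) • B + (⟪C, ξ⟫/2) • C
          + (⟪P, ξ⟫/2) • P + (⟪Q, ξ⟫/2) • Q + (⟪S, ξ⟫/2) • S)⟫ = 0 := by
      intro g hg
      simp only [Set.mem_insert_iff, Set.mem_singleton_iff] at hg
      rcases hg with rfl | rfl | rfl | rfl | rfl | rfl <;>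
      · simp only [hAd, hBd, hCd, hPd, hQd, hSd, inner_sub_right, inner_add_right,
          inner_smul_right, inner_add_left, inner_sub_left, hw]
        simp (config := { decide := true }) only [if_true, if_false]
        ring
    have hz2 : ∀ y ∈ Submodule.span ℝ ({A, B, C, P, Q, S} : Set E),
        ⟪y, ξ - ((⟪A, ξ⟫/2) • A + (⟪B, ξ⟫/2) • B + (⟪C, ξ⟫/2) • C
          + (⟪P, ξ⟫/2) • P + (⟪Q, ξ⟫/2) • Q + (⟪S, ξ⟫/2) • S)⟫ = 0 := by
      intro y hy
      induction hy using Submodule.span_induction with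
      | mem g hg => exact horto g hg
      | zero => simp
      | add a b _ _ ha hb => rw [inner_add_left, ha, hb]; norm_num
      | smul c a _ ha => rw [real_inner_smul_left, ha]; ring
    rw [← sub_eq_zero]
    refine inner_self_eq_zero.mp (hz2 _ ?_)
    rw [hS6]
    exact Submodule.mem_top
  -- eigenvalue/coefficient relations
  have coeff : ∀ (ξ : E) (μ : ℝ), W ξ = μ • ξ →
      (4 - μ) * ⟪A, ξ⟫ = 0 ∧ (-2 - μ) * ⟪B, ξ⟫ = 0 ∧ (-2 - μ) * ⟪C, ξ⟫ = 0 ∧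
      μ * ⟪P, ξ⟫ = 0 ∧ μ * ⟪Q, ξ⟫ = 0 ∧ μ * ⟪S, ξ⟫ = 0 := by
    intro ξ μ hξ
    have hA1 := hWsym A ξ; rw [W1, hξ] at hA1
    have hB1 := hWsym B ξ; rw [W2, hξ] at hB1
    have hC1 := hWsym C ξ; rw [W3, hξ] at hC1
    have hP1 := hWsym P ξ; rw [W4, hξ] at hP1
    have hQ1 := hWsym Q ξ; rw [W5, hξ] at hQ1
    have hS1 := hWsym S ξ; rw [W6, hξ] at hS1
    simp only [real_inner_smul_left, real_inner_smul_right, inner_zero_left] at hA1 hB1 hC1 hP1 hQ1 hS1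
    exact ⟨by linarith, by linarith, by linarith, by linarith, by linarith, by linarith⟩
  have part7 : ∀ (ξ : E) (μ : ℝ), W ξ = μ • ξ →
      ξ ∈ Submodule.span ℝ ({A, B, C} : Set E) ∨
      ξ ∈ Submodule.span ℝ ({P, Q, S} : Set E) := by
    intro ξ μ hξ
    obtain ⟨h1, h2, h3, h4, h5, h6⟩ := coeff ξ μ hξ
    by_cases hμ : μ = 0
    · right
      subst hμ
      have ha : ⟪A, ξ⟫ = 0 := (mul_eq_zero.mp h1).resolve_left (by norm_num)
      have hb : ⟪B, ξ⟫ = 0 := (mul_eq_zero.mp h2).resolve_left (by norm_num)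
      have hc : ⟪C, ξ⟫ = 0 := (mul_eq_zero.mp h3).resolve_left (by norm_num)
      rw [hbasis ξ, ha, hb, hc]
      simp only [zero_div, zero_smul, zero_add, add_zero]
      refine Submodule.add_mem _ (Submodule.add_mem _
        (Submodule.smul_mem _ _ (Submodule.subset_span (by simp)))
        (Submodule.smul_mem _ _ (Submodule.subset_span (by simp))))
        (Submodule.smul_mem _ _ (Submodule.subset_span (by simp)))
    · left
      have hp : ⟪P, ξ⟫ = 0 := (mul_eq_zero.mp h4).resolve_left hμ
      have hq : ⟪Q, ξ⟫ = 0 := (mul_eq_zero.mp h5).resolve_left hμ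
      have hs : ⟪S, ξ⟫ = 0 := (mul_eq_zero.mp h6).resolve_left hμ
      rw [hbasis ξ, hp, hq, hs]
      simp only [zero_div, zero_smul, zero_add, add_zero]
      refine Submodule.add_mem _ (Submodule.add_mem _
        (Submodule.smul_mem _ _ (Submodule.subset_span (by simp)))
        (Submodule.smul_mem _ _ (Submodule.subset_span (by simp))))
        (Submodule.smul_mem _ _ (Submodule.subset_span (by simp)))
  have part8 : ∀ (ξ : E) (μ : ℝ), ξ ≠ 0 → W ξ = μ • ξ → ¬ ∃ x y : V, ξ = w x y := by
    rintro ξ μ hne hξ ⟨x, y, rfl⟩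
    obtain ⟨h1, h2, h3, h4, h5, h6⟩ := coeff _ μ hξ
    -- Plücker relation
    have hpl : ⟪w (e 0) (e 1), w x y⟫ * ⟪w (e 2) (e 3), w x y⟫
        - ⟪w (e 0) (e 2), w x y⟫ * ⟪w (e 1) (e 3), w x y⟫
        + ⟪w (e 0) (e 3), w x y⟫ * ⟪w (e 1) (e 2), w x y⟫ = 0 := by
      simp only [hinner]; ring
    simp only [hAd, hBd, hCd, hPd, hQd, hSd, inner_add_left, inner_sub_left] at h1 h2 h3 h4 h5 h6
    -- show all six coefficients vanish
    have key : ⟪w (e 0) (e 1), w x y⟫ = 0 ∧ ⟪w (e 2) (e 3), w x y⟫ = 0 ∧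
        ⟪w (e 0) (e 2), w x y⟫ = 0 ∧ ⟪w (e 1) (e 3), w x y⟫ = 0 ∧
        ⟪w (e 0) (e 3), w x y⟫ = 0 ∧ ⟪w (e 1) (e 2), w x y⟫ = 0 := by
      set c01 := ⟪w (e 0) (e 1), w x y⟫
      set c23 := ⟪w (e 2) (e 3), w x y⟫
      set c02 := ⟪w (e 0) (e 2), w x y⟫
      set c13 := ⟪w (e 1) (e 3), w x y⟫
      set c03 := ⟪w (e 0) (e 3), w x y⟫
      set c12 := ⟪w (e 1) (e 2), w x y⟫
      clear_value c01 c23 c02 c13 c03 c12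
      by_cases hμ : μ = 0
      · subst hμ
        have e1 : c23 = -c01 := by
          have := (mul_eq_zero.mp h1).resolve_left (by norm_num); linarith
        have e2 : c13 = c02 := by
          have := (mul_eq_zero.mp h2).resolve_left (by norm_num); linarith
        have e3 : c12 = -c03 := by
          have := (mul_eq_zero.mp h3).resolve_left (by norm_num); linarith
        rw [e1, e2, e3] at hpl
        have hsq : c01 ^ 2 + c02 ^ 2 + c03 ^ 2 = 0 := by linear_combination -hpl
        have z1 : c01 = 0 := by
          have := sq_nonneg c01; have := sq_nonneg c02; have := sq_nonneg c03
          have h : c01 ^ 2 = 0 := by linarith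
          exact pow_eq_zero_iff two_ne_zero |>.mp h
        have z2 : c02 = 0 := by
          have := sq_nonneg c01; have := sq_nonneg c02; have := sq_nonneg c03
          have h : c02 ^ 2 = 0 := by linarith
          exact pow_eq_zero_iff two_ne_zero |>.mp h
        have z3 : c03 = 0 := by
          have := sq_nonneg c01; have := sq_nonneg c02; have := sq_nonneg c03
          have h : c03 ^ 2 = 0 := by linarith
          exact pow_eq_zero_iff two_ne_zero |>.mp h
        exact ⟨z1, by linarith, z2, by linarith, z3, by linarith⟩
      · have e1 : c23 = c01 := by
          have := (mul_eq_zero.mp h4).resolve_left hμ; linarith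
        have e2 : c13 = -c02 := by
          have := (mul_eq_zero.mp h5).resolve_left hμ; linarith
        have e3 : c12 = c03 := by
          have := (mul_eq_zero.mp h6).resolve_left hμ; linarith
        rw [e1, e2, e3] at hpl
        have hsq : c01 ^ 2 + c02 ^ 2 + c03 ^ 2 = 0 := by linear_combination hpl
        have z1 : c01 = 0 := by
          have := sq_nonneg c01; have := sq_nonneg c02; have := sq_nonneg c03
          have h : c01 ^ 2 = 0 := by linarith
          exact pow_eq_zero_iff two_ne_zero |>.mp h
        have z2 : c02 = 0 := by
          have := sq_nonneg c01; have := sq_nonneg c02; have := sq_nonneg c03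
          have h : c02 ^ 2 = 0 := by linarith
          exact pow_eq_zero_iff two_ne_zero |>.mp h
        have z3 : c03 = 0 := by
          have := sq_nonneg c01; have := sq_nonneg c02; have := sq_nonneg c03
          have h : c03 ^ 2 = 0 := by linarith
          exact pow_eq_zero_iff two_ne_zero |>.mp h
        exact ⟨z1, by linarith, z2, by linarith, z3, by linarith⟩
    obtain ⟨z1, z2, z3, z4, z5, z6⟩ := key
    apply hne
    have hco : ⟪A, w x y⟫ = 0 ∧ ⟪B, w x y⟫ = 0 ∧ ⟪C, w x y⟫ = 0 ∧
        ⟪P, w x y⟫ = 0 ∧ ⟪Q, w x y⟫ = 0 ∧ ⟪S, w x y⟫ = 0 := by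
      simp only [hAd, hBd, hCd, hPd, hQd, hSd, inner_add_left, inner_sub_left,
        z1, z2, z3, z4, z5, z6]
      norm_num
    obtain ⟨k1, k2, k3, k4, k5, k6⟩ := hco
    conv_lhs => rw [hbasis (w x y)]
    rw [k1, k2, k3, k4, k5, k6]
    simp
  refine ⟨W1, W2, W3, W4, W5, W6, part7, part8, ?_⟩
  -- part 9: no eigenflag
  rintro ⟨v, hv, hinv⟩
  set K := Submodule.span ℝ {ξ : E | ∃ u : V, ⟪v, u⟫ = 0 ∧ ξ = w v u} with hKd
  have hK : ∀ ξ ∈ K, ∃ u : V, ⟪v, u⟫ = 0 ∧ ξ = w v u := by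
    intro ξ hξ
    induction hξ using Submodule.span_induction with
    | mem g hg => exact hg
    | zero => exact ⟨0, by simp, by simp⟩
    | add a b _ _ ha hb =>
        obtain ⟨u1, hu1, rfl⟩ := ha
        obtain ⟨u2, hu2, rfl⟩ := hb
        exact ⟨u1 + u2, by rw [inner_add_right, hu1, hu2]; norm_num, by rw [map_add]⟩
    | smul c a _ ha =>
        obtain ⟨u1, hu1, rfl⟩ := ha
        exact ⟨c • u1, by rw [real_inner_smul_right, hu1]; ring, by rw [map_smul]⟩
  -- a nonzero element of K
  have hv2 : ⟪v, v⟫ = 1 := by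
    rw [real_inner_self_eq_norm_sq, hv]; norm_num
  have hvsum : ⟪e 0, v⟫ * ⟪e 0, v⟫ + ⟪e 1, v⟫ * ⟪e 1, v⟫ + ⟪e 2, v⟫ * ⟪e 2, v⟫
      + ⟪e 3, v⟫ * ⟪e 3, v⟫ = 1 := by
    have := e.sum_inner_mul_inner v v
    rw [Fin.sum_univ_four] at this
    rw [← hv2, ← this]
    simp [real_inner_comm]
  set u : V := ⟪e 1, v⟫ • e 0 - ⟪e 0, v⟫ • e 1 + ⟪e 3, v⟫ • e 2 - ⟪e 2, v⟫ • e 3 with hud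
  have hvu : ⟪v, u⟫ = 0 := by
    rw [hud]
    simp only [inner_add_right, inner_sub_right, real_inner_smul_right]
    simp only [real_inner_comm v]
    ring
  have huu : ⟪u, u⟫ = 1 := by
    rw [hud]
    simp only [inner_add_right, inner_sub_right, inner_smul_right, inner_add_left,
      inner_sub_left, inner_smul_left, he]
    simp (config := { decide := true }) only [if_true, if_false]
    simp only [starRingEnd_apply, star_trivial]
    linear_combination hvsum
  have hwvu : ⟪w v u, w v u⟫ = 1 := by
    rw [hinner, hvu, hv2, huu]; norm_num
  have hne : w v u ≠ 0 := by
    intro h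
    rw [h, inner_zero_left] at hwvu
    norm_num at hwvu
  have hmem : w v u ∈ K := Submodule.subset_span ⟨u, hvu, rfl⟩
  haveI : Nontrivial K := ⟨⟨⟨w v u, hmem⟩, 0, by simpa [Submodule.mk_eq_zero] using hne⟩⟩
  have hWK : ∀ x ∈ K, W x ∈ K := fun x hx => hinv x hx
  have hTsym : (W.restrict hWK).IsSymmetric := hWsym.restrict_invariant hWK
  have heig := hTsym.hasEigenvalue_iSup_of_finiteDimensional
  obtain ⟨ξ₀, hξ₀⟩ := heig.exists_hasEigenvector
  have hval : W (ξ₀ : E) = (⨆ x : {x : K // x ≠ 0},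
      RCLike.re ⟪(W.restrict hWK) x, (x : K)⟫ / ‖(x : K)‖ ^ 2 : ℝ) • (ξ₀ : E) := by
    have h := hξ₀.apply_eq_smul
    calc W (ξ₀ : E) = ((W.restrict hWK) ξ₀ : E) := (LinearMap.restrict_coe_apply _ _ _).symm
      _ = _ := by rw [h]; rfl
  have hne0 : (ξ₀ : E) ≠ 0 := fun h => hξ₀.2 (Subtype.ext h)
  obtain ⟨u', _, hval'⟩ := hK _ ξ₀.2
  exact part8 _ _ hne0 hval ⟨v, u', hval'⟩
end
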